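/- arXiv:2102.06620 — 6 statements merged into one kernel-verified Lean document; each statement's English description precedes it below -/
import Mathlib

section
/- Let E be a complete separable metric space carrying a continuous scaling, and let F ⊆ E be a closed cone with d(x,F) < d(u•x,F) for all u > 1 and x ∉ F. Let X be an E-valued random element that is regularly varying on E∖F with limit measure μ: there is a function b : (0,∞) → (0,∞) with b(x) → ∞ such that b(x)·E[f(x⁻¹•X)] → ∫ f dμ as x → ∞ for every bounded continuous f : E → ℝ vanishing on F^r for some r > 0, where μ is a nonzero measure in M(E∖F). Let A ⊆ E be a Borel set bounded away from F with μ(A) > 0 and μ(∂A) = 0. Then for every bounded continuous g : E → ℝ, E[g(x⁻¹•X)·1{x⁻¹•X ∈ A}] / P(x⁻¹•X ∈ A) → (1/μ(A))·∫_A g dμ as x → ∞; that is, the conditional law of x⁻¹•X given x⁻¹•X ∈ A converges weakly to μ(A ∩ ·)/μ(A). -/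
set_option maxHeartbeats 1000000

open MeasureTheory Filter Metric Topology

/-- Core convergence lemma: `b x * ∫ (A.indicator g)(σ x⁻¹ (X ω)) dP → ∫_A g dμ`. -/
lemma aux_core
    {E : Type*} [MetricSpace E] [MeasurableSpace E] [BorelSpace E]
    {Ω : Type*} [MeasurableSpace Ω] (P : Measure Ω) [IsProbabilityMeasure P]
    (σ : ℝ → E → E)
    (hσcont : ∀ u : ℝ, 0 < u → Continuous (σ u))
    (F : Set E)
    (X : Ω → E) (hX : Measurable X)
    (b : ℝ → ℝ) (hb : ∀ x : ℝ, 0 < x → 0 < b x)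
    (μ : Measure E)
    (hμFin : ∀ r > (0 : ℝ), μ {x | r ≤ infDist x F} ≠ ⊤)
    (hRV : ∀ f : E → ℝ, Continuous f → (∃ C, ∀ x, |f x| ≤ C) →
      (∃ r > (0 : ℝ), ∀ x, infDist x F < r → f x = 0) →
      Tendsto (fun x : ℝ => b x * ∫ ω, f (σ x⁻¹ (X ω)) ∂P) atTop (𝓝 (∫ y, f y ∂μ)))
    (A : Set E) (hA : MeasurableSet A)
    (r : ℝ) (hr : 0 < r) (hrA : ∀ a ∈ A, r ≤ infDist a F)
    (hAne : A.Nonempty) (hAbd : μ (frontier A) = 0)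
    (g : E → ℝ) (hg : Continuous g) (C : ℝ) (hC : ∀ x, |g x| ≤ C) :
    Tendsto (fun x : ℝ => b x * ∫ ω, (A.indicator g) (σ x⁻¹ (X ω)) ∂P) atTop
      (𝓝 (∫ y in A, g y ∂μ)) := by
  -- basic constants
  obtain ⟨a₀, ha₀⟩ := hAne
  have hC0 : 0 ≤ C := le_trans (abs_nonneg _) (hC a₀)
  set C' : ℝ := C + 1 with hC'def
  have hC'pos : 0 < C' := by linarith
  have hgC' : ∀ x, |g x| ≤ C' := fun x => by have := hC x; linarith
  -- the closed superset at distance ≥ r from F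
  have hSr_closed : ∀ t : ℝ, IsClosed {x : E | t ≤ infDist x F} :=
    fun t => isClosed_le continuous_const (continuous_infDist_pt F)
  have hKsub : closure A ⊆ {x : E | r ≤ infDist x F} :=
    closure_minimal (fun a ha => hrA a ha) (hSr_closed r)
  set K : Set E := closure A with hKdef
  have hKne : K.Nonempty := ⟨a₀, subset_closure ha₀⟩
  have hKclosed : IsClosed K := isClosed_closure
  -- interior complement nonempty
  have hAneU : A ≠ Set.univ := by
    intro h
    rcases Set.eq_empty_or_nonempty F with hF | ⟨f₀, hf₀⟩
    · have := hrA a₀ ha₀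
      rw [hF, infDist_empty] at this; linarith
    · have := hrA f₀ (h ▸ Set.mem_univ f₀)
      rw [infDist_zero_of_mem hf₀] at this; linarith
  have hIcne : ((interior A)ᶜ : Set E).Nonempty := by
    rw [Set.nonempty_compl]
    intro h
    exact hAneU (Set.eq_univ_of_univ_subset (h ▸ interior_subset))
  -- the approximating families
  set f' : ℝ → E → ℝ := fun ε y => max 0 (1 - ε⁻¹ * infDist y K) with hf'def
  set h' : ℝ → E → ℝ := fun ε y => min 1 (ε⁻¹ * infDist y (interior A)ᶜ) with hh'def
  have hf'cont : ∀ ε : ℝ, Continuous (f' ε) :=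
    fun ε => continuous_const.max (continuous_const.sub (continuous_const.mul
      (continuous_infDist_pt K)))
  have hh'cont : ∀ ε : ℝ, Continuous (h' ε) :=
    fun ε => continuous_const.min (continuous_const.mul (continuous_infDist_pt _))
  have hf'0 : ∀ ε y, 0 ≤ f' ε y := fun ε y => le_max_left _ _
  have hf'1 : ∀ ε y, 0 < ε → f' ε y ≤ 1 := by
    intro ε y hε
    have h1 : ε⁻¹ * infDist y K ≥ 0 := mul_nonneg (by positivity) infDist_nonneg
    exact max_le zero_le_one (by linarith)
  have hf'A : ∀ ε y, y ∈ A → f' ε y = 1 := by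
    intro ε y hy
    have h0 : infDist y K = 0 := infDist_zero_of_mem ((subset_closure : A ⊆ K) hy)
    show max 0 (1 - ε⁻¹ * infDist y K) = 1
    rw [h0]; simp
  have hh'0 : ∀ ε y, 0 < ε → 0 ≤ h' ε y := fun ε y hε =>
    le_min zero_le_one (mul_nonneg (by positivity) infDist_nonneg)
  have hh'1 : ∀ ε y, h' ε y ≤ 1 := fun ε y => min_le_left _ _
  have hh'nA : ∀ ε y, y ∉ A → h' ε y = 0 := by
    intro ε y hy
    have : y ∈ (interior A)ᶜ := fun h => hy (interior_subset h)
    simp [hh'def, infDist_zero_of_mem this]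
  -- f' vanishes at infDist ≥ ε : key computation
  have hf'zero : ∀ ε y, 0 < ε → ε ≤ infDist y K → f' ε y = 0 := by
    intro ε y hε hd
    have : ε⁻¹ * ε ≤ ε⁻¹ * infDist y K :=
      mul_le_mul_of_nonneg_left hd (by positivity)
    rw [inv_mul_cancel₀ (ne_of_gt hε)] at this
    exact max_eq_left (by linarith)
  -- f' ε vanishes near F when ε ≤ r/2
  have hf'van : ∀ ε y, 0 < ε → ε ≤ r / 2 → infDist y F < r / 2 → f' ε y = 0 := by
    intro ε y hε hεr hy
    refine hf'zero ε y hε ?_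
    by_contra hlt
    push_neg at hlt
    obtain ⟨a, haK, hda⟩ := (infDist_lt_iff hKne).1 hlt
    have h1 : r ≤ infDist a F := hKsub haK
    have h2 : infDist a F ≤ infDist y F + dist a y := infDist_le_infDist_add_dist
    rw [dist_comm] at hda
    linarith
  -- h' ε vanishes near F (unconditionally in ε > 0)
  have hh'van : ∀ ε y, infDist y F < r → h' ε y = 0 := by
    intro ε y hy
    by_contra h0
    have hyA : y ∈ A := by
      by_contra hyA; exact h0 (hh'nA ε y hyA)
    exact absurd (hrA y hyA) (not_le.2 hy)
  have hh'f' : ∀ ε y, 0 < ε → h' ε y ≤ f' ε y := by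
    intro ε y hε
    by_cases hy : y ∈ A
    · rw [hf'A ε y hy]; exact hh'1 ε y
    · rw [hh'nA ε y hy]; exact hf'0 ε y
  -- the sequence of epsilons
  set ε : ℕ → ℝ := fun n => r / (2 * (n + 1)) with hεdef
  have hεpos : ∀ n, 0 < ε n := fun n => by positivity
  have hεle : ∀ n, ε n ≤ r / 2 := by
    intro n
    rw [hεdef]
    rw [div_le_div_iff₀ (by positivity) (by positivity)]
    nlinarith [Nat.cast_nonneg (α := ℝ) n, hr]
  have hεtend : Tendsto ε atTop (𝓝 0) := by
    have h2 : Tendsto (fun n : ℕ => 2 * ((n : ℝ) + 1)) atTop atTop := by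
      apply Tendsto.const_mul_atTop (by norm_num)
      exact tendsto_atTop_add_const_right atTop 1 tendsto_natCast_atTop_atTop
    exact Tendsto.div_atTop tendsto_const_nhds h2
  -- domination set
  set S : Set E := {x : E | r / 2 ≤ infDist x F} with hSdef
  have hSmeas : MeasurableSet S := (hSr_closed (r / 2)).measurableSet
  have hμS : μ S ≠ ⊤ := hμFin (r / 2) (by positivity)
  have hμSlt : μ S < ⊤ := lt_top_iff_ne_top.2 hμS
  -- bound functions integrable
  have hbnd_int : Integrable (S.indicator fun _ => C') μ := by
    rw [integrable_indicator_iff hSmeas]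
    exact integrableOn_const hμS
  -- integrable families over μ
  have hf'g_int : ∀ n, Integrable (fun y => f' (ε n) y * g y) μ := by
    intro n
    refine Integrable.mono' hbnd_int
      (((hf'cont _).mul hg).aestronglyMeasurable) (Filter.Eventually.of_forall ?_)
    intro y
    by_cases hy : y ∈ S
    · rw [Set.indicator_of_mem hy]
      rw [Real.norm_eq_abs, abs_mul]
      calc |f' (ε n) y| * |g y| ≤ 1 * C' := by
            apply mul_le_mul _ (hgC' y) (abs_nonneg _) zero_le_one
            rw [abs_of_nonneg (hf'0 _ y)]; exact hf'1 _ y (hεpos n)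
        _ = C' := one_mul _
    · rw [Set.indicator_of_notMem hy]
      have : infDist y F < r / 2 := not_le.1 hy
      rw [hf'van _ y (hεpos n) (hεle n) this]
      simp
  have hf'_int : ∀ n, Integrable (f' (ε n)) μ := by
    intro n
    refine Integrable.mono' hbnd_int ((hf'cont _).aestronglyMeasurable)
      (Filter.Eventually.of_forall ?_)
    intro y
    by_cases hy : y ∈ S
    · rw [Set.indicator_of_mem hy, Real.norm_eq_abs, abs_of_nonneg (hf'0 _ y)]
      have := hf'1 (ε n) y (hεpos n); linarith
    · rw [Set.indicator_of_notMem hy, hf'van _ y (hεpos n) (hεle n) (not_le.1 hy)]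
      simp
  have hh'_int : ∀ n, Integrable (h' (ε n)) μ := by
    intro n
    refine Integrable.mono' hbnd_int ((hh'cont _).aestronglyMeasurable)
      (Filter.Eventually.of_forall ?_)
    intro y
    by_cases hy : y ∈ S
    · rw [Set.indicator_of_mem hy, Real.norm_eq_abs, abs_of_nonneg (hh'0 _ y (hεpos n))]
      have := hh'1 (ε n) y; linarith
    · rw [Set.indicator_of_notMem hy]
      have h2 : infDist y F < r := lt_of_lt_of_le (not_le.1 hy) (by linarith)
      rw [hh'van _ y h2]; simp
  -- pointwise limits
  have hf'lim : ∀ y, Tendsto (fun n => f' (ε n) y) atTop (𝓝 (K.indicator (fun _ => (1:ℝ)) y)) := by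
    intro y
    by_cases hy : y ∈ K
    · rw [Set.indicator_of_mem hy]
      have : ∀ n, f' (ε n) y = 1 := by
        intro n; simp [hf'def, infDist_zero_of_mem hy]
      simpa [this] using tendsto_const_nhds (x := (1:ℝ)) (f := atTop (α := ℕ))
    · rw [Set.indicator_of_notMem hy]
      have hd : 0 < infDist y K := (hKclosed.notMem_iff_infDist_pos hKne).1 hy
      refine Tendsto.congr' ?_ (tendsto_const_nhds (x := (0:ℝ)))
      have := hεtend.eventually (gt_mem_nhds hd)
      filter_upwards [this] with n hn
      exact (hf'zero (ε n) y (hεpos n) hn.le).symm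
  have hh'lim : ∀ y, Tendsto (fun n => h' (ε n) y)
      atTop (𝓝 ((interior A).indicator (fun _ => (1:ℝ)) y)) := by
    intro y
    by_cases hy : y ∈ interior A
    · rw [Set.indicator_of_mem hy]
      have hd : 0 < infDist y (interior A)ᶜ := by
        refine (isClosed_compl_iff.2 isOpen_interior).notMem_iff_infDist_pos hIcne |>.1 ?_
        simpa using hy
      refine Tendsto.congr' ?_ (tendsto_const_nhds (x := (1:ℝ)))
      filter_upwards [hεtend.eventually (gt_mem_nhds hd)] with n hn
      have : (1:ℝ) ≤ (ε n)⁻¹ * infDist y (interior A)ᶜ := by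
        rw [← inv_mul_cancel₀ (ne_of_gt (hεpos n))]
        exact mul_le_mul_of_nonneg_left hn.le (by positivity)
      exact (min_eq_left this).symm
    · rw [Set.indicator_of_notMem hy]
      have : ∀ n, h' (ε n) y = 0 := by
        intro n
        have : y ∈ (interior A)ᶜ := hy
        simp [hh'def, infDist_zero_of_mem this]
      simpa [this] using tendsto_const_nhds (x := (0:ℝ)) (f := atTop (α := ℕ))
  -- measure facts
  have hμclos : μ K = μ A := by
    refine le_antisymm ?_ (measure_mono subset_closure)
    calc μ K ≤ μ (A ∪ frontier A) := measure_mono (by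
          intro y hy
          by_cases h : y ∈ A
          · exact Or.inl h
          · exact Or.inr ⟨hy, fun h2 => h (interior_subset h2)⟩)
      _ ≤ μ A + μ (frontier A) := measure_union_le _ _
      _ = μ A := by rw [hAbd, add_zero]
  have hμint : μ (interior A) = μ A := by
    refine le_antisymm (measure_mono interior_subset) ?_
    calc μ A ≤ μ (interior A ∪ frontier A) := measure_mono (by
          intro y hy
          by_cases h : y ∈ interior A
          · exact Or.inl h
          · exact Or.inr ⟨subset_closure hy, h⟩)
      _ ≤ μ (interior A) + μ (frontier A) := measure_union_le _ _
      _ = μ (interior A) := by rw [hAbd, add_zero]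
  have hμAfin : μ A ≠ ⊤ := by
    intro h
    apply hμS
    refine top_le_iff.1 ?_
    rw [← h]
    exact measure_mono (fun a ha => by
      have := hrA a ha; simp only [hSdef, Set.mem_setOf_eq]; linarith)
  -- ae-equality of A and its closure / interior
  have hKae : (K : Set E) =ᵐ[μ] A := by
    rw [Filter.eventuallyEq_set]
    have h1 : μ (K \ A) = 0 := by
      refine measure_mono_null ?_ hAbd
      intro y hy
      exact ⟨hy.1, fun h2 => hy.2 (interior_subset h2)⟩
    filter_upwards [measure_eq_zero_iff_ae_notMem.1 h1] with y hy
    constructor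
    · intro h; by_contra hA'; exact hy ⟨h, hA'⟩
    · exact fun h => subset_closure h
  -- DCT (i): ∫ f' (ε n) * g dμ → ∫_A g dμ
  set L : ℝ := ∫ y in A, g y ∂μ with hLdef
  have hDCT1 : Tendsto (fun n => ∫ y, f' (ε n) y * g y ∂μ) atTop (𝓝 L) := by
    have hlimfun : (∫ y, K.indicator (fun _ => (1:ℝ)) y * g y ∂μ) = L := by
      have : ∀ y, K.indicator (fun _ => (1:ℝ)) y * g y = K.indicator g y := by
        intro y
        by_cases hy : y ∈ K <;> simp [Set.indicator_apply, hy]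
      rw [hLdef]
      simp_rw [this]
      rw [integral_indicator hKclosed.measurableSet]
      exact setIntegral_congr_set hKae
    rw [← hlimfun]
    refine tendsto_integral_of_dominated_convergence (S.indicator fun _ => C')
      (fun n => ((hf'cont _).mul hg).aestronglyMeasurable) hbnd_int ?_ ?_
    · intro n
      refine Filter.Eventually.of_forall fun y => ?_
      by_cases hy : y ∈ S
      · rw [Set.indicator_of_mem hy, Real.norm_eq_abs, abs_mul]
        calc |f' (ε n) y| * |g y| ≤ 1 * C' := by
              apply mul_le_mul _ (hgC' y) (abs_nonneg _) zero_le_one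
              rw [abs_of_nonneg (hf'0 _ y)]; exact hf'1 _ y (hεpos n)
          _ = C' := one_mul _
      · rw [Set.indicator_of_notMem hy, hf'van _ y (hεpos n) (hεle n) (not_le.1 hy)]
        simp
    · refine Filter.Eventually.of_forall fun y => ?_
      exact (hf'lim y).mul_const (g y)
  -- DCT (ii): Dn → 0
  have hDCTf : Tendsto (fun n => ∫ y, f' (ε n) y ∂μ) atTop (𝓝 ((μ K).toReal)) := by
    have : (∫ y, K.indicator (fun _ => (1:ℝ)) y ∂μ) = (μ K).toReal := by
      simpa [measureReal_def] using integral_indicator_const (μ := μ) (1:ℝ) hKclosed.measurableSet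
    rw [← this]
    refine tendsto_integral_of_dominated_convergence (S.indicator fun _ => C')
      (fun n => (hf'cont _).aestronglyMeasurable) hbnd_int ?_ ?_
    · intro n
      refine Filter.Eventually.of_forall fun y => ?_
      by_cases hy : y ∈ S
      · rw [Set.indicator_of_mem hy, Real.norm_eq_abs, abs_of_nonneg (hf'0 _ y)]
        have := hf'1 (ε n) y (hεpos n); linarith
      · rw [Set.indicator_of_notMem hy, hf'van _ y (hεpos n) (hεle n) (not_le.1 hy)]
        simp
    · exact Filter.Eventually.of_forall fun y => hf'lim y
  have hDCTh : Tendsto (fun n => ∫ y, h' (ε n) y ∂μ) atTop (𝓝 ((μ (interior A)).toReal)) := by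
    have : (∫ y, (interior A).indicator (fun _ => (1:ℝ)) y ∂μ) = (μ (interior A)).toReal := by
      simpa [measureReal_def] using integral_indicator_const (μ := μ) (1:ℝ) isOpen_interior.measurableSet
    rw [← this]
    refine tendsto_integral_of_dominated_convergence (S.indicator fun _ => C')
      (fun n => (hh'cont _).aestronglyMeasurable) hbnd_int ?_ ?_
    · intro n
      refine Filter.Eventually.of_forall fun y => ?_
      by_cases hy : y ∈ S
      · rw [Set.indicator_of_mem hy, Real.norm_eq_abs, abs_of_nonneg (hh'0 _ y (hεpos n))]
        have := hh'1 (ε n) y; linarith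
      · rw [Set.indicator_of_notMem hy]
        have h2 : infDist y F < r := lt_of_lt_of_le (not_le.1 hy) (by linarith)
        rw [hh'van _ y h2]; simp
    · exact Filter.Eventually.of_forall fun y => hh'lim y
  set Dn : ℕ → ℝ := fun n => ∫ y, (f' (ε n) y - h' (ε n) y) ∂μ with hDndef
  have hDnEq : ∀ n, Dn n = (∫ y, f' (ε n) y ∂μ) - ∫ y, h' (ε n) y ∂μ := by
    intro n
    exact integral_sub (hf'_int n) (hh'_int n)
  have hDn0 : Tendsto Dn atTop (𝓝 0) := by
    have := hDCTf.sub hDCTh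
    rw [hμclos, hμint, sub_self] at this
    refine Tendsto.congr (fun n => (hDnEq n).symm) this
  -- the hRV limits for the approximating functions
  have hRVfg : ∀ n, Tendsto (fun x : ℝ => b x * ∫ ω, (f' (ε n) (σ x⁻¹ (X ω)) * g (σ x⁻¹ (X ω)))
      ∂P) atTop (𝓝 (∫ y, f' (ε n) y * g y ∂μ)) := by
    intro n
    exact hRV (fun y => f' (ε n) y * g y) ((hf'cont _).mul hg)
      ⟨C', fun y => by
        rw [abs_mul]
        calc |f' (ε n) y| * |g y| ≤ 1 * C' := by
              apply mul_le_mul _ (hgC' y) (abs_nonneg _) zero_le_one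
              rw [abs_of_nonneg (hf'0 _ y)]; exact hf'1 _ y (hεpos n)
          _ = C' := one_mul _⟩
      ⟨r / 2, by positivity, fun y hy => by
        show f' (ε n) y * g y = 0
        rw [hf'van _ y (hεpos n) (hεle n) hy, zero_mul]⟩
  have hRVfh : ∀ n, Tendsto (fun x : ℝ => b x * ∫ ω,
      (f' (ε n) (σ x⁻¹ (X ω)) - h' (ε n) (σ x⁻¹ (X ω))) ∂P) atTop (𝓝 (Dn n)) := by
    intro n
    exact hRV (fun y => f' (ε n) y - h' (ε n) y) ((hf'cont _).sub (hh'cont _))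
      ⟨1, fun y => by
        show |f' (ε n) y - h' (ε n) y| ≤ 1
        rw [abs_of_nonneg (by linarith [hh'f' (ε n) y (hεpos n)])]
        have := hf'1 (ε n) y (hεpos n)
        have := hh'0 (ε n) y (hεpos n)
        linarith⟩
      ⟨r / 2, by positivity, fun y hy => by
        show f' (ε n) y - h' (ε n) y = 0
        rw [hf'van _ y (hεpos n) (hεle n) hy,
          hh'van _ y (lt_of_lt_of_le hy (by linarith)), sub_zero]⟩
  -- pointwise key estimate
  have hkey : ∀ n y, |A.indicator g y - f' (ε n) y * g y| ≤ C' * (f' (ε n) y - h' (ε n) y) := by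
    intro n y
    by_cases hy : y ∈ A
    · rw [Set.indicator_of_mem hy, hf'A _ y hy, one_mul, sub_self, abs_zero]
      exact mul_nonneg hC'pos.le (by linarith [hh'1 (ε n) y])
    · rw [Set.indicator_of_notMem hy, hh'nA _ y hy, sub_zero, zero_sub, abs_neg, abs_mul,
        abs_of_nonneg (hf'0 _ y)]
      calc f' (ε n) y * |g y| ≤ f' (ε n) y * C' :=
            mul_le_mul_of_nonneg_left (hgC' y) (hf'0 _ y)
        _ = C' * f' (ε n) y := mul_comm _ _
  -- The integral comparison over P, for x ≥ 1
  have hcomp : ∀ n, ∀ x : ℝ, 1 ≤ x →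
      |(∫ ω, (A.indicator g) (σ x⁻¹ (X ω)) ∂P) -
        ∫ ω, (f' (ε n) (σ x⁻¹ (X ω)) * g (σ x⁻¹ (X ω))) ∂P| ≤
        C' * ∫ ω, (f' (ε n) (σ x⁻¹ (X ω)) - h' (ε n) (σ x⁻¹ (X ω))) ∂P := by
    intro n x hx
    have hxpos : (0:ℝ) < x⁻¹ := by positivity
    have hYm : Measurable (fun ω => σ x⁻¹ (X ω)) := (hσcont _ hxpos).measurable.comp hX
    have hu_int : Integrable (fun ω => (A.indicator g) (σ x⁻¹ (X ω))) P := by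
      refine Integrable.mono' (integrable_const C') ?_ (Filter.Eventually.of_forall fun ω => ?_)
      · exact ((hg.measurable.indicator hA).comp hYm).aestronglyMeasurable
      · rw [Real.norm_eq_abs]
        by_cases hy : σ x⁻¹ (X ω) ∈ A
        · rw [Set.indicator_of_mem hy]; exact hgC' _
        · rw [Set.indicator_of_notMem hy, abs_zero]; exact hC'pos.le
    have hv_int : Integrable (fun ω => f' (ε n) (σ x⁻¹ (X ω)) * g (σ x⁻¹ (X ω))) P := by
      refine Integrable.mono' (integrable_const C') ?_ (Filter.Eventually.of_forall fun ω => ?_)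
      · exact (((hf'cont _).mul hg).comp (hσcont _ hxpos)).measurable.comp hX
          |>.aestronglyMeasurable
      · rw [Real.norm_eq_abs, abs_mul]
        calc |f' (ε n) _| * |g _| ≤ 1 * C' := by
              apply mul_le_mul _ (hgC' _) (abs_nonneg _) zero_le_one
              rw [abs_of_nonneg (hf'0 _ _)]; exact hf'1 _ _ (hεpos n)
          _ = C' := one_mul _
    have hw_int : Integrable (fun ω => f' (ε n) (σ x⁻¹ (X ω)) - h' (ε n) (σ x⁻¹ (X ω))) P := by
      refine Integrable.mono' (integrable_const (1:ℝ)) ?_ (Filter.Eventually.of_forall fun ω => ?_)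
      · exact (((hf'cont _).sub (hh'cont _)).comp (hσcont _ hxpos)).measurable.comp hX
          |>.aestronglyMeasurable
      · rw [Real.norm_eq_abs, abs_of_nonneg (by linarith [hh'f' (ε n) (σ x⁻¹ (X ω)) (hεpos n)])]
        have := hf'1 (ε n) (σ x⁻¹ (X ω)) (hεpos n)
        have := hh'0 (ε n) (σ x⁻¹ (X ω)) (hεpos n)
        linarith
    rw [← integral_sub hu_int hv_int]
    calc |∫ ω, ((A.indicator g) (σ x⁻¹ (X ω)) - f' (ε n) (σ x⁻¹ (X ω)) * g (σ x⁻¹ (X ω))) ∂P|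
        ≤ ∫ ω, |(A.indicator g) (σ x⁻¹ (X ω)) - f' (ε n) (σ x⁻¹ (X ω)) * g (σ x⁻¹ (X ω))| ∂P := by
          simpa [Real.norm_eq_abs] using
            norm_integral_le_integral_norm
              (fun ω => (A.indicator g) (σ x⁻¹ (X ω)) - f' (ε n) (σ x⁻¹ (X ω)) * g (σ x⁻¹ (X ω)))
      _ ≤ ∫ ω, C' * (f' (ε n) (σ x⁻¹ (X ω)) - h' (ε n) (σ x⁻¹ (X ω))) ∂P := by
          refine integral_mono ((hu_int.sub hv_int).abs) (hw_int.const_mul C') ?_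
          intro ω
          exact hkey n (σ x⁻¹ (X ω))
      _ = C' * ∫ ω, (f' (ε n) (σ x⁻¹ (X ω)) - h' (ε n) (σ x⁻¹ (X ω))) ∂P := by
          rw [integral_const_mul]
  -- final ε-argument
  rw [Metric.tendsto_nhds]
  intro η hη
  -- choose n
  have hchoice : ∃ n : ℕ, |(∫ y, f' (ε n) y * g y ∂μ) - L| < η / 4 ∧ C' * Dn n < η / 4 := by
    have h1 := (Metric.tendsto_nhds.1 hDCT1) (η / 4) (by linarith)
    have h2 := (Metric.tendsto_nhds.1 (hDn0.const_mul C')) (η / 4) (by linarith)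
    have := (h1.and h2).exists
    obtain ⟨n, hn1, hn2⟩ := this
    refine ⟨n, ?_, ?_⟩
    · rwa [Real.dist_eq] at hn1
    · simp only [Real.dist_eq, mul_zero, sub_zero] at hn2
      exact lt_of_le_of_lt (le_abs_self _) hn2
  obtain ⟨n, hn1, hn2⟩ := hchoice
  have hη4C : 0 < η / (4 * C') := by positivity
  have hev1 : ∀ᶠ x : ℝ in atTop, (1:ℝ) ≤ x := eventually_ge_atTop 1
  have hev2 := (Metric.tendsto_nhds.1 (hRVfg n)) (η / 4) (by linarith)
  have hev3 := (Metric.tendsto_nhds.1 (hRVfh n)) (η / (4 * C')) hη4C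
  filter_upwards [hev1, hev2, hev3] with x hx1 hx2 hx3
  show dist (b x * ∫ ω, (A.indicator g) (σ x⁻¹ (X ω)) ∂P) L < η
  replace hx2 : dist (b x * ∫ ω, (f' (ε n) (σ x⁻¹ (X ω)) * g (σ x⁻¹ (X ω))) ∂P)
      (∫ y, f' (ε n) y * g y ∂μ) < η / 4 := hx2
  replace hx3 : dist (b x * ∫ ω, (f' (ε n) (σ x⁻¹ (X ω)) - h' (ε n) (σ x⁻¹ (X ω))) ∂P)
      (Dn n) < η / (4 * C') := hx3
  rw [Real.dist_eq] at hx2 hx3 ⊢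
  have hbx : 0 < b x := hb x (by linarith)
  -- abbreviations
  set N := ∫ ω, (A.indicator g) (σ x⁻¹ (X ω)) ∂P with hNdef
  set V := ∫ ω, (f' (ε n) (σ x⁻¹ (X ω)) * g (σ x⁻¹ (X ω))) ∂P with hVdef
  set W := ∫ ω, (f' (ε n) (σ x⁻¹ (X ω)) - h' (ε n) (σ x⁻¹ (X ω))) ∂P with hWdef
  have hNV : |N - V| ≤ C' * W := hcomp n x hx1
  have hbW : |b x * W - Dn n| < η / (4 * C') := hx3
  have hbV : |b x * V - ∫ y, f' (ε n) y * g y ∂μ| < η / 4 := hx2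
  have hbNV : |b x * N - b x * V| ≤ C' * (b x * W) := by
    rw [← mul_sub, abs_mul, abs_of_pos hbx]
    calc b x * |N - V| ≤ b x * (C' * W) := mul_le_mul_of_nonneg_left hNV hbx.le
      _ = C' * (b x * W) := by ring
  have hbWbound : b x * W < Dn n + η / (4 * C') := by
    have := abs_lt.1 hbW
    linarith [this.1, this.2]
  have hCbW : C' * (b x * W) < η / 2 := by
    have h5 : C' * (b x * W) ≤ C' * (Dn n + η / (4 * C')) :=
      mul_le_mul_of_nonneg_left hbWbound.le hC'pos.le
    have h6 : C' * (η / (4 * C')) = η / 4 := by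
      field_simp
    nlinarith
  calc |b x * N - L|
      ≤ |b x * N - b x * V| + |b x * V - ∫ y, f' (ε n) y * g y ∂μ| +
        |(∫ y, f' (ε n) y * g y ∂μ) - L| := by
        have := abs_sub_le (b x * N) (b x * V) (∫ y, f' (ε n) y * g y ∂μ)
        have := abs_sub_le (b x * V) (∫ y, f' (ε n) y * g y ∂μ) L
        have h0 := abs_sub_le (b x * N) (∫ y, f' (ε n) y * g y ∂μ) L
        linarith [abs_sub_le (b x * N) (b x * V) (∫ y, f' (ε n) y * g y ∂μ),
          abs_sub_le (b x * N) (∫ y, f' (ε n) y * g y ∂μ) L]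
    _ < η := by
        have := le_trans hbNV hCbW.le
        linarith

/-- Conditional limit theorem under regular variation on `E∖F`
(Proposition 2.2 of the paper). -/
theorem stmt_1
    {E : Type*} [MetricSpace E] [CompleteSpace E] [TopologicalSpace.SeparableSpace E]
    [MeasurableSpace E] [BorelSpace E]
    {Ω : Type*} [MeasurableSpace Ω] (P : Measure Ω) [IsProbabilityMeasure P]
    (σ : ℝ → E → E)
    (hσc : ContinuousOn (fun p : ℝ × E => σ p.1 p.2) (Set.Ioi (0 : ℝ) ×ˢ Set.univ))
    (hσ1 : ∀ x, σ 1 x = x)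
    (hσm : ∀ u v : ℝ, 0 < u → 0 < v → ∀ x, σ u (σ v x) = σ (u * v) x)
    (F : Set E) (hFclosed : IsClosed F)
    (hFcone : ∀ x ∈ F, ∀ u : ℝ, 0 < u → σ u x ∈ F)
    (hFdist : ∀ u : ℝ, 1 < u → ∀ x ∉ F, infDist x F < infDist (σ u x) F)
    (X : Ω → E) (hX : Measurable X)
    (b : ℝ → ℝ) (hb : ∀ x : ℝ, 0 < x → 0 < b x) (hbTop : Tendsto b atTop atTop)
    (μ : Measure E) (hμ0 : μ ≠ 0)
    (hμFin : ∀ r > (0 : ℝ), μ {x | r ≤ infDist x F} ≠ ⊤)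
    (hRV : ∀ f : E → ℝ, Continuous f → (∃ C, ∀ x, |f x| ≤ C) →
      (∃ r > (0 : ℝ), ∀ x, infDist x F < r → f x = 0) →
      Tendsto (fun x : ℝ => b x * ∫ ω, f (σ x⁻¹ (X ω)) ∂P) atTop (𝓝 (∫ y, f y ∂μ)))
    (A : Set E) (hA : MeasurableSet A)
    (hAaway : ∃ r > (0 : ℝ), ∀ a ∈ A, r ≤ infDist a F)
    (hApos : 0 < μ A) (hAbd : μ (frontier A) = 0) :
    ∀ g : E → ℝ, Continuous g → (∃ C, ∀ x, |g x| ≤ C) →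
      Tendsto (fun x : ℝ =>
          (∫ ω, Set.indicator {ω | σ x⁻¹ (X ω) ∈ A} (fun ω => g (σ x⁻¹ (X ω))) ω ∂P) /
            (P {ω | σ x⁻¹ (X ω) ∈ A}).toReal)
        atTop (𝓝 ((∫ y in A, g y ∂μ) / (μ A).toReal)) := by
  intro g hg hgC
  obtain ⟨C, hC⟩ := hgC
  obtain ⟨r, hr, hrA⟩ := hAaway
  -- continuity of each dilation
  have hσcont : ∀ u : ℝ, 0 < u → Continuous (σ u) := by
    intro u hu
    rw [continuous_iff_continuousAt]
    intro y
    have hopen : IsOpen (Set.Ioi (0 : ℝ) ×ˢ (Set.univ : Set E)) :=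
      isOpen_Ioi.prod isOpen_univ
    have hmem : ((u, y) : ℝ × E) ∈ Set.Ioi (0 : ℝ) ×ˢ (Set.univ : Set E) :=
      ⟨hu, Set.mem_univ y⟩
    have hca : ContinuousAt (fun p : ℝ × E => σ p.1 p.2) (u, y) :=
      hσc.continuousAt (hopen.mem_nhds hmem)
    exact hca.comp (Continuous.continuousAt (by fun_prop : Continuous fun y : E => ((u, y) : ℝ × E)))
  -- A is nonempty
  have hAne : A.Nonempty := by
    rcases Set.eq_empty_or_nonempty A with h | h
    · rw [h, measure_empty] at hApos; exact absurd hApos (lt_irrefl 0)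
    · exact h
  -- μ A is finite and positive in ℝ
  have hμAfin : μ A ≠ ⊤ := by
    intro h
    apply hμFin r hr
    refine top_le_iff.1 ?_
    rw [← h]
    exact measure_mono (fun a ha => hrA a ha)
  have hμAtoReal : 0 < (μ A).toReal := ENNReal.toReal_pos (ne_of_gt hApos) hμAfin
  -- numerator and denominator convergence
  have hNum := aux_core P σ hσcont F X hX b hb μ hμFin hRV A hA r hr hrA hAne hAbd
    g hg C hC
  have hDen' := aux_core P σ hσcont F X hX b hb μ hμFin hRV A hA r hr hrA hAne hAbd
    (fun _ => (1:ℝ)) continuous_const 1 (fun x => by norm_num)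
  have hDenLim : (∫ y in A, (1:ℝ) ∂μ) = (μ A).toReal := by
    rw [setIntegral_const, smul_eq_mul, mul_one, measureReal_def]
  rw [hDenLim] at hDen'
  -- ratio converges
  have hdiv : Tendsto (fun x : ℝ =>
      (b x * ∫ ω, (A.indicator g) (σ x⁻¹ (X ω)) ∂P) /
        (b x * ∫ ω, (A.indicator (fun _ => (1:ℝ))) (σ x⁻¹ (X ω)) ∂P)) atTop
      (𝓝 ((∫ y in A, g y ∂μ) / (μ A).toReal)) :=
    hNum.div hDen' (ne_of_gt hμAtoReal)
  refine Tendsto.congr' ?_ hdiv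
  filter_upwards [eventually_ge_atTop (1:ℝ)] with x hx1
  have hxpos : (0:ℝ) < x⁻¹ := by positivity
  have hbx : b x ≠ 0 := ne_of_gt (hb x (by linarith))
  have hNumEq : (∫ ω, (A.indicator g) (σ x⁻¹ (X ω)) ∂P) =
      ∫ ω, Set.indicator {ω | σ x⁻¹ (X ω) ∈ A} (fun ω => g (σ x⁻¹ (X ω))) ω ∂P := by
    congr 1
  have hmeasSet : MeasurableSet {ω | σ x⁻¹ (X ω) ∈ A} :=
    ((hσcont _ hxpos).measurable.comp hX) hA
  have hDenEq : (∫ ω, (A.indicator (fun _ => (1:ℝ))) (σ x⁻¹ (X ω)) ∂P) =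
      (P {ω | σ x⁻¹ (X ω) ∈ A}).toReal := by
    have h1 : (fun ω => (A.indicator (fun _ => (1:ℝ))) (σ x⁻¹ (X ω))) =
        fun ω => Set.indicator {ω | σ x⁻¹ (X ω) ∈ A} (fun _ => (1:ℝ)) ω := by
      funext ω
      by_cases hy : σ x⁻¹ (X ω) ∈ A <;>
        simp [Set.indicator_apply, hy]
    rw [h1]
    simpa [measureReal_def] using integral_indicator_const (μ := P) (1:ℝ) hmeasSet
  rw [mul_div_mul_left _ _ hbx, hNumEq, hDenEq]
end

section
/- Let E be a complete separable metric space, F ⊆ E a closed set, and let μ_n (n ≥ 1) and μ be measures in M(E∖F). The following are equivalent: (i) ∫ f dμ_n → ∫ f dμ as n → ∞ for every bounded continuous f : E → ℝ vanishing on F^r for some r > 0; (ii) for every Borel set A ⊆ E bounded away from F, μ(int A) ≤ liminf_{n→∞} μ_n(A) ≤ limsup_{n→∞} μ_n(A) ≤ μ(cl A), where int A, cl A denote the interior and closure of A. -/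
open MeasureTheory Filter Metric Topology
open Set
open scoped ENNReal NNReal

section Helpers

variable {E : Type*} [MetricSpace E] [MeasurableSpace E] [BorelSpace E]

private lemma aux_int (ν : Measure E) {D : Set E} (hD : MeasurableSet D) (hνD : ν D ≠ ⊤)
    {g : E → ℝ} (hg : Continuous g) {C : ℝ}
    (hb : ∀ x, |g x| ≤ C) (h0 : ∀ x ∉ D, g x = 0) : Integrable g ν := by
  refine Integrable.mono' (g := D.indicator fun _ => C)
    ((integrable_indicator_iff hD).2 (integrableOn_const hνD.lt_top.ne))
    hg.aestronglyMeasurable (Eventually.of_forall fun x => ?_)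
  by_cases hx : x ∈ D
  · simpa [Set.indicator_of_mem hx] using hb x
  · simp [Set.indicator_of_notMem hx, h0 x hx]

private lemma auxA {F : Set E} {μn : ℕ → Measure E} {μ : Measure E}
    (hμnFin : ∀ n, ∀ r > (0:ℝ), μn n {x | r ≤ infDist x F} ≠ ⊤)
    (hμFin : ∀ r > (0:ℝ), μ {x | r ≤ infDist x F} ≠ ⊤)
    (H : ∀ f : E → ℝ, Continuous f → (∃ C, ∀ x, |f x| ≤ C) →
        (∃ r > (0:ℝ), ∀ x, infDist x F < r → f x = 0) →
        Tendsto (fun n : ℕ => ∫ x, f x ∂(μn n)) atTop (𝓝 (∫ x, f x ∂μ)))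
    {C : Set E} (hC : IsClosed C) {r : ℝ} (hr : 0 < r)
    (hCr : ∀ a ∈ C, r ≤ infDist a F) :
    limsup (fun n => μn n C) atTop ≤ μ C := by
  rcases C.eq_empty_or_nonempty with rfl | hCne
  · simp
  set D : Set E := {x | r/2 ≤ infDist x F} with hDdef
  have hDm : MeasurableSet D :=
    (isClosed_le continuous_const (continuous_infDist_pt F)).measurableSet
  have hμD : μ D ≠ ⊤ := hμFin (r/2) (by linarith)
  have hμnD : ∀ n, μn n D ≠ ⊤ := fun n => hμnFin n (r/2) (by linarith)
  have hCD : C ⊆ D := fun a ha => by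
    have := hCr a ha; simp only [hDdef, mem_setOf_eq]; linarith
  have hμC : μ C ≠ ⊤ := fun h => hμD (top_le_iff.1 (h ▸ measure_mono hCD))
  have hμnC : ∀ n, μn n C ≠ ⊤ := fun n h => hμnD n (top_le_iff.1 (h ▸ measure_mono hCD))
  set δ : ℕ → ℝ := fun k => (r/2) / (k+1) with hδdef
  have hδpos : ∀ k, 0 < δ k := fun k => by positivity
  have hδle : ∀ k, δ k ≤ r/2 := fun k => by
    rw [hδdef]
    rw [div_le_iff₀ (by positivity)]
    nlinarith [Nat.cast_nonneg (α := ℝ) k]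
  set g : ℕ → E → ℝ := fun k x => max 0 (1 - infDist x C / δ k) with hgdef
  have hgcont : ∀ k, Continuous (g k) := fun k =>
    continuous_const.max (continuous_const.sub ((continuous_infDist_pt C).div_const _))
  have hg0 : ∀ k x, 0 ≤ g k x := fun k x => le_max_left _ _
  have hg1 : ∀ k x, g k x ≤ 1 := fun k x => by
    apply max_le (by norm_num)
    have : 0 ≤ infDist x C / δ k := div_nonneg infDist_nonneg (hδpos k).le
    linarith
  -- key distance estimate
  have hfar : ∀ x, infDist x F < r/2 → r/2 ≤ infDist x C := by
    intro x hx
    by_contra h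
    push_neg at h
    obtain ⟨c, hc, hdc⟩ := (infDist_lt_iff hCne).1 h
    have h1 : r ≤ infDist c F := hCr c hc
    have h2 : infDist c F ≤ infDist x F + dist c x := infDist_le_infDist_add_dist
    rw [dist_comm] at h2
    linarith
  have hvan : ∀ k x, infDist x F < r/2 → g k x = 0 := by
    intro k x hx
    have h1 : δ k ≤ infDist x C := (hδle k).trans (hfar x hx)
    apply max_eq_left
    have h2 : (1:ℝ) ≤ infDist x C / δ k := (one_le_div (hδpos k)).2 h1
    linarith
  have hoffD : ∀ k, ∀ x ∉ D, g k x = 0 := fun k x hx =>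
    hvan k x (by simpa [hDdef, mem_setOf_eq, not_le] using hx)
  have habs : ∀ k x, |g k x| ≤ 1 := fun k x => abs_le.2 ⟨by linarith [hg0 k x], hg1 k x⟩
  have hgint : ∀ k (ν : Measure E), ν D ≠ ⊤ → Integrable (g k) ν := fun k ν hν =>
    aux_int ν hDm hν (hgcont k) (habs k) (hoffD k)
  have hindint : ∀ (ν : Measure E), ν D ≠ ⊤ → Integrable (C.indicator fun _ => (1:ℝ)) ν := by
    intro ν hν
    refine (integrable_indicator_iff hC.measurableSet).2 (integrableOn_const ?_)
    exact (lt_of_le_of_lt (measure_mono hCD) hν.lt_top).ne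
  have hind : ∀ k x, C.indicator (fun _ => (1:ℝ)) x ≤ g k x := by
    intro k x
    by_cases hx : x ∈ C
    · rw [indicator_of_mem hx]
      simp [hgdef, infDist_zero_of_mem hx]
    · rw [indicator_of_notMem hx]; exact hg0 k x
  have hindeq : ∀ ν : Measure E, ∫ x, C.indicator (fun _ => (1:ℝ)) x ∂ν = (ν C).toReal := by
    intro ν
    rw [integral_indicator_const (1:ℝ) hC.measurableSet]; simp; rfl
  have hstep1 : ∀ k n, μn n C ≤ ENNReal.ofReal (∫ x, g k x ∂(μn n)) := by
    intro k n
    have h1 : (μn n C).toReal ≤ ∫ x, g k x ∂(μn n) := by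
      have := integral_mono (hindint (μn n) (hμnD n)) (hgint k (μn n) (hμnD n)) (hind k)
      rwa [hindeq (μn n)] at this
    calc μn n C = ENNReal.ofReal (μn n C).toReal := (ENNReal.ofReal_toReal (hμnC n)).symm
      _ ≤ _ := ENNReal.ofReal_le_ofReal h1
  have hH : ∀ k, Tendsto (fun n => ∫ x, g k x ∂(μn n)) atTop (𝓝 (∫ x, g k x ∂μ)) :=
    fun k => H (g k) (hgcont k) ⟨1, habs k⟩ ⟨r/2, by linarith, hvan k⟩
  have hstep3 : ∀ k, limsup (fun n => μn n C) atTop ≤ ENNReal.ofReal (∫ x, g k x ∂μ) := by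
    intro k
    have h1 : limsup (fun n => μn n C) atTop
        ≤ limsup (fun n => ENNReal.ofReal (∫ x, g k x ∂(μn n))) atTop :=
      limsup_le_limsup (Eventually.of_forall (hstep1 k))
    have h2 : Tendsto (fun n => ENNReal.ofReal (∫ x, g k x ∂(μn n))) atTop
        (𝓝 (ENNReal.ofReal (∫ x, g k x ∂μ))) :=
      (ENNReal.continuous_ofReal.tendsto _).comp (hH k)
    rwa [h2.limsup_eq] at h1
  have hdom : Tendsto (fun k => ∫ x, g k x ∂μ) atTop
      (𝓝 (∫ x, C.indicator (fun _ => (1:ℝ)) x ∂μ)) := by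
    refine tendsto_integral_of_dominated_convergence (D.indicator fun _ => (1:ℝ))
      (fun k => (hgcont k).aestronglyMeasurable) ?_ ?_ ?_
    · exact (integrable_indicator_iff hDm).2 (integrableOn_const hμD.lt_top.ne)
    · intro k
      refine Eventually.of_forall fun x => ?_
      by_cases hx : x ∈ D
      · rw [indicator_of_mem hx, Real.norm_eq_abs]; exact habs k x
      · rw [indicator_of_notMem hx, hoffD k x hx]; simp
    · refine Eventually.of_forall fun x => ?_
      by_cases hx : x ∈ C
      · have hgx : ∀ k, g k x = 1 := fun k => by simp [hgdef, infDist_zero_of_mem hx]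
        rw [indicator_of_mem hx]
        simpa [hgx] using (tendsto_const_nhds : Tendsto (fun _ : ℕ => (1:ℝ)) atTop _)
      · have ha : 0 < infDist x C := (hC.notMem_iff_infDist_pos hCne).1 hx
        rw [indicator_of_notMem hx]
        obtain ⟨K, hK⟩ := exists_nat_ge ((r/2) / infDist x C)
        have hzero : ∀ k ≥ K, g k x = 0 := by
          intro k hk
          have hKa : r/2 ≤ (K:ℝ) * infDist x C := (div_le_iff₀ ha).1 hK
          have hkK : (K:ℝ) ≤ (k:ℝ) + 1 := by
            have : (K:ℝ) ≤ (k:ℝ) := Nat.cast_le.2 hk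
            linarith
          have h1 : δ k ≤ infDist x C := by
            rw [hδdef, div_le_iff₀ (by positivity)]
            nlinarith
          apply max_eq_left
          have h2 : (1:ℝ) ≤ infDist x C / δ k := (one_le_div (hδpos k)).2 h1
          linarith
        exact tendsto_atTop_of_eventually_const hzero
  have hfin : Tendsto (fun k => ENNReal.ofReal (∫ x, g k x ∂μ)) atTop (𝓝 (μ C)) := by
    have h1 : ∫ x, C.indicator (fun _ => (1:ℝ)) x ∂μ = (μ C).toReal := hindeq μ
    have h2 := (ENNReal.continuous_ofReal.tendsto _).comp hdom
    rw [h1] at h2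
    rwa [ENNReal.ofReal_toReal hμC] at h2
  exact ge_of_tendsto' hfin hstep3

private lemma auxB {F : Set E} {μn : ℕ → Measure E} {μ : Measure E}
    (hμnFin : ∀ n, ∀ r > (0:ℝ), μn n {x | r ≤ infDist x F} ≠ ⊤)
    (hμFin : ∀ r > (0:ℝ), μ {x | r ≤ infDist x F} ≠ ⊤)
    (H : ∀ f : E → ℝ, Continuous f → (∃ C, ∀ x, |f x| ≤ C) →
        (∃ r > (0:ℝ), ∀ x, infDist x F < r → f x = 0) →
        Tendsto (fun n : ℕ => ∫ x, f x ∂(μn n)) atTop (𝓝 (∫ x, f x ∂μ)))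
    {U : Set E} (hU : IsOpen U) {r : ℝ} (hr : 0 < r)
    (hUr : ∀ a ∈ U, r ≤ infDist a F) :
    μ U ≤ liminf (fun n => μn n U) atTop := by
  cases isEmpty_or_nonempty E with
  | inl h =>
    have : U = ∅ := Set.eq_empty_of_isEmpty U
    simp [this]
  | inr hE =>
  rcases Uᶜ.eq_empty_or_nonempty with hUc | hUcne
  · exfalso
    have hUuniv : U = univ := by rwa [compl_empty_iff] at hUc
    obtain ⟨x⟩ := hE
    rcases F.eq_empty_or_nonempty with rfl | ⟨y, hy⟩
    · have := hUr x (hUuniv ▸ mem_univ x)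
      rw [infDist_empty] at this; linarith
    · have := hUr y (hUuniv ▸ mem_univ y)
      rw [infDist_zero_of_mem hy] at this; linarith
  set D : Set E := {x | r ≤ infDist x F} with hDdef
  have hDm : MeasurableSet D :=
    (isClosed_le continuous_const (continuous_infDist_pt F)).measurableSet
  have hμD : μ D ≠ ⊤ := hμFin r hr
  have hμnD : ∀ n, μn n D ≠ ⊤ := fun n => hμnFin n r hr
  have hUD : U ⊆ D := fun a ha => hUr a ha
  have hμU : μ U ≠ ⊤ := fun h => hμD (top_le_iff.1 (h ▸ measure_mono hUD))
  have hμnU : ∀ n, μn n U ≠ ⊤ := fun n h => hμnD n (top_le_iff.1 (h ▸ measure_mono hUD))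
  set δ : ℕ → ℝ := fun k => 1 / (k+1) with hδdef
  have hδpos : ∀ k, 0 < δ k := fun k => by positivity
  set g : ℕ → E → ℝ := fun k x => min 1 (infDist x Uᶜ / δ k) with hgdef
  have hgcont : ∀ k, Continuous (g k) := fun k =>
    continuous_const.min ((continuous_infDist_pt Uᶜ).div_const _)
  have hg0 : ∀ k x, 0 ≤ g k x := fun k x =>
    le_min (by norm_num) (div_nonneg infDist_nonneg (hδpos k).le)
  have hg1 : ∀ k x, g k x ≤ 1 := fun k x => min_le_left _ _
  have habs : ∀ k x, |g k x| ≤ 1 := fun k x => abs_le.2 ⟨by linarith [hg0 k x], hg1 k x⟩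
  have hUzero : ∀ k, ∀ x ∉ U, g k x = 0 := by
    intro k x hx
    have : infDist x Uᶜ = 0 := infDist_zero_of_mem hx
    simp [hgdef, this]
  have hvan : ∀ k x, infDist x F < r → g k x = 0 := by
    intro k x hx
    refine hUzero k x fun hxU => ?_
    exact absurd (hUr x hxU) (not_le.2 hx)
  have hoffD : ∀ k, ∀ x ∉ D, g k x = 0 := fun k x hx =>
    hvan k x (by simpa [hDdef, mem_setOf_eq, not_le] using hx)
  have hgint : ∀ k (ν : Measure E), ν D ≠ ⊤ → Integrable (g k) ν := fun k ν hν =>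
    aux_int ν hDm hν (hgcont k) (habs k) (hoffD k)
  have hindint : ∀ (ν : Measure E), ν D ≠ ⊤ → Integrable (U.indicator fun _ => (1:ℝ)) ν := by
    intro ν hν
    refine (integrable_indicator_iff hU.measurableSet).2 (integrableOn_const ?_)
    exact (lt_of_le_of_lt (measure_mono hUD) hν.lt_top).ne
  have hindeq : ∀ ν : Measure E, ∫ x, U.indicator (fun _ => (1:ℝ)) x ∂ν = (ν U).toReal := by
    intro ν
    rw [integral_indicator_const (1:ℝ) hU.measurableSet]; simp; rfl
  have hind : ∀ k x, g k x ≤ U.indicator (fun _ => (1:ℝ)) x := by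
    intro k x
    by_cases hx : x ∈ U
    · rw [indicator_of_mem hx]; exact hg1 k x
    · rw [indicator_of_notMem hx, hUzero k x hx]
  have hstep1 : ∀ k n, ENNReal.ofReal (∫ x, g k x ∂(μn n)) ≤ μn n U := by
    intro k n
    have h1 : ∫ x, g k x ∂(μn n) ≤ (μn n U).toReal := by
      have := integral_mono (hgint k (μn n) (hμnD n)) (hindint (μn n) (hμnD n)) (hind k)
      rwa [hindeq (μn n)] at this
    calc ENNReal.ofReal (∫ x, g k x ∂(μn n)) ≤ ENNReal.ofReal (μn n U).toReal :=
          ENNReal.ofReal_le_ofReal h1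
      _ = μn n U := ENNReal.ofReal_toReal (hμnU n)
  have hH : ∀ k, Tendsto (fun n => ∫ x, g k x ∂(μn n)) atTop (𝓝 (∫ x, g k x ∂μ)) :=
    fun k => H (g k) (hgcont k) ⟨1, habs k⟩ ⟨r, hr, hvan k⟩
  have hstep3 : ∀ k, ENNReal.ofReal (∫ x, g k x ∂μ) ≤ liminf (fun n => μn n U) atTop := by
    intro k
    have h2 : Tendsto (fun n => ENNReal.ofReal (∫ x, g k x ∂(μn n))) atTop
        (𝓝 (ENNReal.ofReal (∫ x, g k x ∂μ))) :=
      (ENNReal.continuous_ofReal.tendsto _).comp (hH k)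
    have h1 : liminf (fun n => ENNReal.ofReal (∫ x, g k x ∂(μn n))) atTop
        ≤ liminf (fun n => μn n U) atTop :=
      liminf_le_liminf (Eventually.of_forall (hstep1 k))
    rwa [h2.liminf_eq] at h1
  have hdom : Tendsto (fun k => ∫ x, g k x ∂μ) atTop
      (𝓝 (∫ x, U.indicator (fun _ => (1:ℝ)) x ∂μ)) := by
    refine tendsto_integral_of_dominated_convergence (D.indicator fun _ => (1:ℝ))
      (fun k => (hgcont k).aestronglyMeasurable) ?_ ?_ ?_
    · exact (integrable_indicator_iff hDm).2 (integrableOn_const hμD.lt_top.ne)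
    · intro k
      refine Eventually.of_forall fun x => ?_
      by_cases hx : x ∈ D
      · rw [indicator_of_mem hx, Real.norm_eq_abs]; exact habs k x
      · rw [indicator_of_notMem hx, hoffD k x hx]; simp
    · refine Eventually.of_forall fun x => ?_
      by_cases hx : x ∈ U
      · have ha : 0 < infDist x Uᶜ :=
          (hU.isClosed_compl.notMem_iff_infDist_pos hUcne).1 (fun h => h hx)
        rw [indicator_of_mem hx]
        obtain ⟨K, hK⟩ := exists_nat_ge (1 / infDist x Uᶜ)
        have hone : ∀ k ≥ K, g k x = 1 := by
          intro k hk
          have hKa : 1 ≤ (K:ℝ) * infDist x Uᶜ := (div_le_iff₀ ha).1 hK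
          have hkK : (K:ℝ) ≤ (k:ℝ) + 1 := by
            have : (K:ℝ) ≤ (k:ℝ) := Nat.cast_le.2 hk
            linarith
          have h1 : δ k ≤ infDist x Uᶜ := by
            rw [hδdef, div_le_iff₀ (by positivity)]
            nlinarith
          exact min_eq_left ((one_le_div (hδpos k)).2 h1)
        exact tendsto_atTop_of_eventually_const hone
      · rw [indicator_of_notMem hx]
        have : ∀ k, g k x = 0 := fun k => hUzero k x hx
        simpa [this] using (tendsto_const_nhds : Tendsto (fun _ : ℕ => (0:ℝ)) atTop _)
  have hfin : Tendsto (fun k => ENNReal.ofReal (∫ x, g k x ∂μ)) atTop (𝓝 (μ U)) := by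
    have h2 := (ENNReal.continuous_ofReal.tendsto _).comp hdom
    rw [hindeq μ] at h2
    rwa [ENNReal.ofReal_toReal hμU] at h2
  exact le_of_tendsto' hfin hstep3

private lemma auxC {F : Set E} {μn : ℕ → Measure E} {μ : Measure E}
    (hμnFin : ∀ n, ∀ r > (0:ℝ), μn n {x | r ≤ infDist x F} ≠ ⊤)
    (hμFin : ∀ r > (0:ℝ), μ {x | r ≤ infDist x F} ≠ ⊤)
    (H2 : ∀ A : Set E, MeasurableSet A → (∃ r > (0:ℝ), ∀ a ∈ A, r ≤ infDist a F) →
          μ (interior A) ≤ liminf (fun n : ℕ => μn n A) atTop ∧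
            limsup (fun n : ℕ => μn n A) atTop ≤ μ (closure A))
    {f : E → ℝ} (hf : Continuous f) {C r : ℝ} (hr : 0 < r)
    (hf0 : ∀ x, 0 ≤ f x) (hfC : ∀ x, f x ≤ C)
    (hvan : ∀ x, infDist x F < r → f x = 0) :
    Tendsto (fun n : ℕ => ∫ x, f x ∂(μn n)) atTop (𝓝 (∫ x, f x ∂μ)) := by
  set C' : ℝ := max C 0 with hC'def
  have hfC' : ∀ x, f x ≤ C' := fun x => (hfC x).trans (le_max_left _ _)
  set D : Set E := {x | r ≤ infDist x F} with hDdef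
  have hDcl : IsClosed D := isClosed_le continuous_const (continuous_infDist_pt F)
  have hDm : MeasurableSet D := hDcl.measurableSet
  have hμD : μ D ≠ ⊤ := hμFin r hr
  have hμnD : ∀ n, μn n D ≠ ⊤ := fun n => hμnFin n r hr
  have hsubD : ∀ x, f x ≠ 0 → x ∈ D := by
    intro x hx
    by_contra h
    exact hx (hvan x (by simpa [hDdef, mem_setOf_eq, not_le] using h))
  have hlimsupD : limsup (fun n => μn n D) atTop ≤ μ D := by
    have := (H2 D hDm ⟨r, hr, fun a ha => ha⟩).2
    rwa [hDcl.closure_eq] at this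
  obtain ⟨N, hN⟩ : ∃ N, ∀ n ≥ N, μn n D < μ D + 1 := by
    have h1 : limsup (fun n => μn n D) atTop < μ D + 1 :=
      lt_of_le_of_lt hlimsupD (ENNReal.lt_add_right hμD one_ne_zero)
    exact eventually_atTop.1 (eventually_lt_of_limsup_lt h1)
  set M : ℝ≥0∞ := (Finset.range N).sup (fun i => μn i D) ⊔ (μ D + 1) with hMdef
  have hM : M ≠ ⊤ := by
    have h2 : M < ⊤ := by
      rw [hMdef]
      exact sup_lt_iff.2 ⟨(Finset.sup_lt_iff (by simp : (⊥:ℝ≥0∞) < ⊤)).2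
        (fun i _ => (hμnD i).lt_top),
        ENNReal.add_lt_top.2 ⟨hμD.lt_top, ENNReal.one_lt_top⟩⟩
    exact h2.ne
  have hMb : ∀ n, μn n D ≤ M := by
    intro n
    rcases lt_or_ge n N with h | h
    · exact le_sup_of_le_left (Finset.le_sup (f := fun i => μn i D) (Finset.mem_range.2 h))
    · exact le_sup_of_le_right (hN n h).le
  have hAsub : ∀ t : ℝ, 0 < t → ∀ a ∈ {a | t < f a}, r ≤ infDist a F := by
    intro t ht a ha
    have h1 : t < f a := ha
    have hfa : f a ≠ 0 := by intro h; rw [h] at h1; linarith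
    exact hsubD a hfa
  have hBsub : ∀ t : ℝ, 0 < t → ∀ a ∈ {a | t ≤ f a}, r ≤ infDist a F := by
    intro t ht a ha
    have h1 : t ≤ f a := ha
    have hfa : f a ≠ 0 := by intro h; rw [h] at h1; linarith
    exact hsubD a hfa
  have hopen : ∀ t : ℝ, 0 < t →
      μ {a | t < f a} ≤ liminf (fun n => μn n {a | t < f a}) atTop := by
    intro t ht
    have hAo : IsOpen {a | t < f a} := isOpen_lt continuous_const hf
    have := (H2 {a | t < f a} hAo.measurableSet ⟨r, hr, hAsub t ht⟩).1
    rwa [hAo.interior_eq] at this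
  have hclosed : ∀ t : ℝ, 0 < t →
      limsup (fun n => μn n {a | t ≤ f a}) atTop ≤ μ {a | t ≤ f a} := by
    intro t ht
    have hBc : IsClosed {a | t ≤ f a} := isClosed_le continuous_const hf
    have := (H2 {a | t ≤ f a} hBc.measurableSet ⟨r, hr, hBsub t ht⟩).2
    rwa [hBc.closure_eq] at this
  have hlimsuplt : ∀ t : ℝ, 0 < t →
      limsup (fun n => μn n {a | t < f a}) atTop ≤ μ {a | t ≤ f a} := fun t ht =>
    le_trans (limsup_le_limsup (Eventually.of_forall fun n =>
      measure_mono fun a (ha : t < f a) => ha.le)) (hclosed t ht)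
  set I : Measure E → ℝ≥0∞ := fun ν => ∫⁻ x, ENNReal.ofReal (f x) ∂ν with hIdef
  have hlc : ∀ ν : Measure E, I ν = ∫⁻ t in Ioi (0:ℝ), ν {a | t < f a} :=
    fun ν => lintegral_eq_lintegral_meas_lt ν (ae_of_all _ hf0) hf.measurable.aemeasurable
  have hlc' : ∀ ν : Measure E, I ν = ∫⁻ t in Ioi (0:ℝ), ν {a | t ≤ f a} :=
    fun ν => lintegral_eq_lintegral_meas_le ν (ae_of_all _ hf0) hf.measurable.aemeasurable
  have humeas : ∀ ν : Measure E, Measurable (fun t : ℝ => ν {a | t < f a}) := by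
    intro ν
    apply Antitone.measurable
    intro s t hst
    exact measure_mono fun a (ha : t < f a) => lt_of_le_of_lt hst ha
  have hliminf : I μ ≤ liminf (fun n => I (μn n)) atTop := by
    calc I μ = ∫⁻ t in Ioi (0:ℝ), μ {a | t < f a} := hlc μ
      _ ≤ ∫⁻ t in Ioi (0:ℝ), liminf (fun n => μn n {a | t < f a}) atTop :=
          lintegral_mono_ae ((ae_restrict_iff' measurableSet_Ioi).2
            (Eventually.of_forall fun t ht => hopen t ht))
      _ ≤ liminf (fun n => ∫⁻ t in Ioi (0:ℝ), μn n {a | t < f a}) atTop :=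
          lintegral_liminf_le (fun n => humeas (μn n))
      _ = liminf (fun n => I (μn n)) atTop := by simp_rw [← hlc]
  have hlimsup : limsup (fun n => I (μn n)) atTop ≤ I μ := by
    have hbound : ∀ n, (fun t : ℝ => μn n {a | t < f a}) ≤ᵐ[volume.restrict (Ioi 0)]
        (Ioc (0:ℝ) C').indicator (fun _ => M) := by
      intro n
      refine (ae_restrict_iff' measurableSet_Ioi).2 (Eventually.of_forall fun t ht => ?_)
      have ht0 : (0:ℝ) < t := ht
      show (μn n) {a | t < f a} ≤ (Ioc (0:ℝ) C').indicator (fun _ => M) t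
      by_cases htC : t ≤ C'
      · have hmem : t ∈ Ioc (0:ℝ) C' := ⟨ht0, htC⟩
        rw [indicator_of_mem hmem]
        refine le_trans (measure_mono fun a (ha : t < f a) => ?_) (hMb n)
        exact hsubD a (fun h => by rw [h] at ha; linarith)
      · have hempty : {a | t < f a} = ∅ := by
          refine eq_empty_iff_forall_notMem.2 fun a (ha : t < f a) => ?_
          exact htC (le_trans ha.le (hfC' a)) |>.elim
        rw [hempty]
        simp
    have hfinbound : ∫⁻ t, (Ioc (0:ℝ) C').indicator (fun _ => M) t
        ∂(volume.restrict (Ioi 0)) ≠ ⊤ := by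
      rw [lintegral_indicator measurableSet_Ioc, setLIntegral_const]
      have h1 : (volume.restrict (Ioi (0:ℝ))) (Ioc (0:ℝ) C') ≤ ENNReal.ofReal C' := by
        rw [Measure.restrict_apply measurableSet_Ioc]
        refine le_trans (measure_mono inter_subset_left) ?_
        rw [Real.volume_Ioc]
        simp
      exact ne_top_of_le_ne_top (ENNReal.mul_ne_top hM ENNReal.ofReal_ne_top)
        (mul_le_mul_right h1 M)
    calc limsup (fun n => I (μn n)) atTop
        = limsup (fun n => ∫⁻ t in Ioi (0:ℝ), μn n {a | t < f a}) atTop := by simp_rw [hlc]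
      _ ≤ ∫⁻ t in Ioi (0:ℝ), limsup (fun n => μn n {a | t < f a}) atTop :=
          limsup_lintegral_le _ (fun n => humeas (μn n)) hbound hfinbound
      _ ≤ ∫⁻ t in Ioi (0:ℝ), μ {a | t ≤ f a} :=
          lintegral_mono_ae ((ae_restrict_iff' measurableSet_Ioi).2
            (Eventually.of_forall fun t ht => hlimsuplt t ht))
      _ = I μ := (hlc' μ).symm
  have htend : Tendsto (fun n => I (μn n)) atTop (𝓝 (I μ)) := by
    have hll : liminf (fun n => I (μn n)) atTop ≤ limsup (fun n => I (μn n)) atTop :=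
      liminf_le_limsup
    refine tendsto_of_liminf_eq_limsup ?_ ?_
    · exact le_antisymm (hll.trans hlimsup) hliminf
    · exact le_antisymm hlimsup (hliminf.trans hll)
  have hIμ : I μ ≠ ⊤ := by
    have hb : ∀ x, ENNReal.ofReal (f x) ≤ D.indicator (fun _ => ENNReal.ofReal C') x := by
      intro x
      by_cases hx : x ∈ D
      · rw [indicator_of_mem hx]; exact ENNReal.ofReal_le_ofReal (hfC' x)
      · rw [indicator_of_notMem hx]
        have hz : f x = 0 := by by_contra h; exact hx (hsubD x h)
        simp [hz]
    refine ne_top_of_le_ne_top ?_ (lintegral_mono hb)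
    rw [lintegral_indicator hDm, setLIntegral_const]
    exact ENNReal.mul_ne_top ENNReal.ofReal_ne_top hμD
  have heq : ∀ ν : Measure E, ∫ x, f x ∂ν = (I ν).toReal := by
    intro ν
    rw [integral_eq_lintegral_of_nonneg_ae (ae_of_all _ hf0) hf.aestronglyMeasurable]
  simp_rw [heq]
  exact (ENNReal.tendsto_toReal hIμ).comp htend

end Helpers


/-- Portmanteau-type characterization of M-convergence on `E∖F`
(Proposition 2.1 (i) ⇔ (ii) of the paper). -/
theorem stmt_2
    {E : Type*} [MetricSpace E] [CompleteSpace E] [TopologicalSpace.SeparableSpace E]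
    [MeasurableSpace E] [BorelSpace E]
    (F : Set E) (hF : IsClosed F)
    (μn : ℕ → Measure E) (μ : Measure E)
    (hμnFin : ∀ n, ∀ r > (0 : ℝ), μn n {x | r ≤ infDist x F} ≠ ⊤)
    (hμFin : ∀ r > (0 : ℝ), μ {x | r ≤ infDist x F} ≠ ⊤) :
    (∀ f : E → ℝ, Continuous f → (∃ C, ∀ x, |f x| ≤ C) →
        (∃ r > (0 : ℝ), ∀ x, infDist x F < r → f x = 0) →
        Tendsto (fun n : ℕ => ∫ x, f x ∂(μn n)) atTop (𝓝 (∫ x, f x ∂μ)))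
      ↔ (∀ A : Set E, MeasurableSet A → (∃ r > (0 : ℝ), ∀ a ∈ A, r ≤ infDist a F) →
          μ (interior A) ≤ liminf (fun n : ℕ => μn n A) atTop ∧
            limsup (fun n : ℕ => μn n A) atTop ≤ μ (closure A)) := by
  constructor
  · intro H A hA hAbd
    obtain ⟨r, hr, hAr⟩ := hAbd
    have hclD : IsClosed {x : E | r ≤ infDist x F} :=
      isClosed_le continuous_const (continuous_infDist_pt F)
    constructor
    · have h1 : μ (interior A) ≤ liminf (fun n => μn n (interior A)) atTop :=
        auxB hμnFin hμFin H isOpen_interior hr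
          (fun a ha => hAr a (interior_subset ha))
      exact h1.trans (liminf_le_liminf (Eventually.of_forall fun n =>
        measure_mono interior_subset))
    · have hsub : closure A ⊆ {x : E | r ≤ infDist x F} :=
        closure_minimal (fun a ha => hAr a ha) hclD
      have h1 : limsup (fun n => μn n (closure A)) atTop ≤ μ (closure A) :=
        auxA hμnFin hμFin H isClosed_closure hr (fun a ha => hsub ha)
      exact le_trans (limsup_le_limsup (Eventually.of_forall fun n =>
        measure_mono subset_closure)) h1
  · intro H2 f hf hbd hvan
    obtain ⟨C, hC⟩ := hbd
    obtain ⟨r, hr, hvan⟩ := hvan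
    set D : Set E := {x | r ≤ infDist x F} with hDdef
    have hDm : MeasurableSet D :=
      (isClosed_le continuous_const (continuous_infDist_pt F)).measurableSet
    have hμD : μ D ≠ ⊤ := hμFin r hr
    have hμnD : ∀ n, μn n D ≠ ⊤ := fun n => hμnFin n r hr
    set fp : E → ℝ := fun x => max (f x) 0 with hfpdef
    set fm : E → ℝ := fun x => max (-f x) 0 with hfmdef
    have hfpcont : Continuous fp := hf.max continuous_const
    have hfmcont : Continuous fm := hf.neg.max continuous_const
    have hfp0 : ∀ x, 0 ≤ fp x := fun x => le_max_right _ _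
    have hfm0 : ∀ x, 0 ≤ fm x := fun x => le_max_right _ _
    have hfpC : ∀ x, fp x ≤ max C 0 :=
      fun x => max_le ((le_abs_self (f x)).trans ((hC x).trans (le_max_left C 0)))
        (le_max_right C 0)
    have hfmC : ∀ x, fm x ≤ max C 0 :=
      fun x => max_le ((neg_le_abs (f x)).trans ((hC x).trans (le_max_left C 0)))
        (le_max_right C 0)
    have hfpvan : ∀ x, infDist x F < r → fp x = 0 := fun x hx => by
      rw [hfpdef]; simp [hvan x hx]
    have hfmvan : ∀ x, infDist x F < r → fm x = 0 := fun x hx => by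
      rw [hfmdef]; simp [hvan x hx]
    have hfp : Tendsto (fun n : ℕ => ∫ x, fp x ∂(μn n)) atTop (𝓝 (∫ x, fp x ∂μ)) :=
      auxC hμnFin hμFin H2 hfpcont hr hfp0 hfpC hfpvan
    have hfm : Tendsto (fun n : ℕ => ∫ x, fm x ∂(μn n)) atTop (𝓝 (∫ x, fm x ∂μ)) :=
      auxC hμnFin hμFin H2 hfmcont hr hfm0 hfmC hfmvan
    have hoffp : ∀ x ∉ D, fp x = 0 := fun x hx =>
      hfpvan x (by simpa [hDdef, mem_setOf_eq, not_le] using hx)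
    have hoffm : ∀ x ∉ D, fm x = 0 := fun x hx =>
      hfmvan x (by simpa [hDdef, mem_setOf_eq, not_le] using hx)
    have habsp : ∀ x, |fp x| ≤ max C 0 := fun x => by
      rw [abs_of_nonneg (hfp0 x)]; exact hfpC x
    have habsm : ∀ x, |fm x| ≤ max C 0 := fun x => by
      rw [abs_of_nonneg (hfm0 x)]; exact hfmC x
    have hsplit : ∀ ν : Measure E, ν D ≠ ⊤ →
        ∫ x, f x ∂ν = ∫ x, fp x ∂ν - ∫ x, fm x ∂ν := by
      intro ν hν
      have h1 : Integrable fp ν := aux_int ν hDm hν hfpcont habsp hoffp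
      have h2 : Integrable fm ν := aux_int ν hDm hν hfmcont habsm hoffm
      have h3 : ∀ x, f x = fp x - fm x := fun x =>
        (max_zero_sub_max_neg_zero_eq_self (f x)).symm
      calc ∫ x, f x ∂ν = ∫ x, (fp x - fm x) ∂ν := by simp_rw [← h3]
        _ = _ := integral_sub h1 h2
    have hmain := hfp.sub hfm
    rw [← hsplit μ hμD] at hmain
    exact hmain.congr fun n => (hsplit (μn n) (hμnD n)).symm
end

section
/- Let ν be a Borel probability measure on 𝒳 with ν({0}) = 0 that is regularly varying with scaling sequence (a_n) and limit measure μ. Let f : 𝒯×𝒳 → [0,∞) be bounded and continuous with f(t,x) = 0 whenever d(0,x) < r_0, for some r_0 > 0. Then: (a) for every t ∈ 𝒯, (L_n f)(t) := n·∫_𝒳 (1 − e^{−f(t, a_n⁻¹•x)}) ν(dx) converges as n → ∞ to (Lf)(t) := ∫_𝒳 (1 − e^{−f(t,x)}) μ(dx); and (b) sup_{n ≥ 1} sup_{t ∈ 𝒯} (L_n f)(t) < ∞. -/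
open MeasureTheory Filter Metric Topology

/-- Pointwise convergence and uniform boundedness of `L_n f` (Lemma 5.3 of the paper). -/
theorem stmt_5
    {T : Type*} [MetricSpace T] [CompleteSpace T] [TopologicalSpace.SeparableSpace T]
    {X : Type*} [MetricSpace X] [CompleteSpace X] [TopologicalSpace.SeparableSpace X]
    [MeasurableSpace X] [BorelSpace X]
    (x0 : X) (σ : ℝ → X → X)
    (hσc : ContinuousOn (fun p : ℝ × X => σ p.1 p.2) (Set.Ioi (0 : ℝ) ×ˢ Set.univ))
    (hσ1 : ∀ x, σ 1 x = x)
    (hσm : ∀ u v : ℝ, 0 < u → 0 < v → ∀ x, σ u (σ v x) = σ (u * v) x)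
    (hσ0 : ∀ u : ℝ, 0 < u → σ u x0 = x0)
    (ν : Measure X) [IsProbabilityMeasure ν] (hν0 : ν {x0} = 0)
    (a : ℕ → ℝ) (ha : ∀ n, 0 < a n) (haTop : Tendsto a atTop atTop)
    (μ : Measure X) (hμ0 : μ ≠ 0)
    (hμFin : ∀ r > (0 : ℝ), μ {x | r ≤ dist x0 x} ≠ ⊤)
    (hRV : ∀ h : X → ℝ, Continuous h → (∃ C, ∀ x, |h x| ≤ C) →
      (∃ ρ > (0 : ℝ), ∀ x, dist x0 x < ρ → h x = 0) →
      Tendsto (fun n : ℕ => (n : ℝ) * ∫ x, h (σ (a n)⁻¹ x) ∂ν) atTop (𝓝 (∫ x, h x ∂μ)))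
    (f : T × X → ℝ) (hfc : Continuous f) (hf0 : ∀ z, 0 ≤ f z) (hfb : ∃ C, ∀ z, f z ≤ C)
    (r0 : ℝ) (hr0 : 0 < r0) (hfvan : ∀ t x, dist x0 x < r0 → f (t, x) = 0) :
    (∀ t : T,
      Tendsto (fun n : ℕ => (n : ℝ) * ∫ x, (1 - Real.exp (-f (t, σ (a n)⁻¹ x))) ∂ν)
        atTop (𝓝 (∫ x, (1 - Real.exp (-f (t, x))) ∂μ)))
    ∧ ∃ C : ℝ, ∀ n : ℕ, ∀ t : T,
        (n : ℝ) * ∫ x, (1 - Real.exp (-f (t, σ (a n)⁻¹ x))) ∂ν ≤ C := by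
  obtain ⟨C0, hC0⟩ := hfb
  set C' : ℝ := max C0 0 with hC'def
  have hC'0 : 0 ≤ C' := le_max_right _ _
  have hfC' : ∀ z, f z ≤ C' := fun z => le_trans (hC0 z) (le_max_left _ _)
  -- part (a)
  have parta : ∀ t : T,
      Tendsto (fun n : ℕ => (n : ℝ) * ∫ x, (1 - Real.exp (-f (t, σ (a n)⁻¹ x))) ∂ν)
        atTop (𝓝 (∫ x, (1 - Real.exp (-f (t, x))) ∂μ)) := by
    intro t
    apply hRV
    · exact continuous_const.sub ((hfc.comp (Continuous.prodMk_right t)).neg.rexp)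
    · refine ⟨1, fun x => ?_⟩
      have h1 : Real.exp (-f (t, x)) ≤ 1 := Real.exp_le_one_iff.mpr (neg_nonpos.mpr (hf0 _))
      have h2 : 0 < Real.exp (-f (t, x)) := Real.exp_pos _
      rw [abs_le]; constructor <;> nlinarith
    · exact ⟨r0, hr0, fun x hx => by rw [hfvan t x hx, neg_zero, Real.exp_zero, sub_self]⟩
  refine ⟨parta, ?_⟩
  -- dominating function g
  set g : X → ℝ := fun x => min 1 (max 0 (2 / r0 * dist x0 x - 1)) with hgdef
  have hg01 : ∀ x, 0 ≤ g x ∧ g x ≤ 1 := by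
    intro x
    exact ⟨le_min zero_le_one (le_max_left _ _), min_le_left _ _⟩
  have hgc : Continuous g :=
    continuous_const.min (continuous_const.max (by fun_prop))
  have hgv : ∀ x, dist x0 x < r0 / 2 → g x = 0 := by
    intro x hx
    have : 2 / r0 * dist x0 x - 1 ≤ 0 := by
      have h0 : 0 ≤ dist x0 x := dist_nonneg
      rw [div_mul_eq_mul_div, sub_nonpos, div_le_one hr0]
      nlinarith
    simp only [hgdef]
    rw [max_eq_left this, min_eq_right zero_le_one]
  have hg1 : ∀ x, r0 ≤ dist x0 x → g x = 1 := by
    intro x hx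
    have : (1 : ℝ) ≤ 2 / r0 * dist x0 x - 1 := by
      rw [le_sub_iff_add_le, div_mul_eq_mul_div, le_div_iff₀ hr0]
      nlinarith
    simp only [hgdef]
    rw [max_eq_right (le_trans zero_le_one this), min_eq_left this]
  have hgTend := hRV g hgc ⟨1, fun x => abs_le.mpr ⟨by linarith [(hg01 x).1], (hg01 x).2⟩⟩
      ⟨r0 / 2, by linarith, hgv⟩
  obtain ⟨M, hM⟩ := hgTend.bddAbove_range
  have hMmem : ∀ n : ℕ, (n : ℝ) * ∫ x, g (σ (a n)⁻¹ x) ∂ν ≤ M := fun n =>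
    hM (Set.mem_range_self n)
  -- key pointwise inequality
  have hkey : ∀ (t : T) (x : X),
      1 - Real.exp (-f (t, x)) ≤ (1 - Real.exp (-C')) * g x := by
    intro t x
    have factor : 0 ≤ 1 - Real.exp (-C') := by
      have := Real.exp_le_one_iff.mpr (neg_nonpos.mpr hC'0); linarith
    by_cases hx : dist x0 x < r0
    · rw [hfvan t x hx, neg_zero, Real.exp_zero, sub_self]
      exact mul_nonneg factor (hg01 x).1
    · push_neg at hx
      rw [hg1 x hx, mul_one]
      have : Real.exp (-C') ≤ Real.exp (-f (t, x)) :=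
        Real.exp_le_exp.mpr (neg_le_neg (hfC' _))
      linarith
  -- integrability helper
  have hint : ∀ h : X → ℝ, Continuous h → (∀ x, |h x| ≤ 1) → Integrable h ν := by
    intro h hc hb
    exact (integrable_const (1 : ℝ)).mono' hc.aestronglyMeasurable (ae_of_all _ hb)
  have hσcont : ∀ u : ℝ, 0 < u → Continuous (fun x => σ u x) := by
    intro u hu
    rw [← continuousOn_univ]
    exact hσc.comp (continuous_const.prodMk continuous_id).continuousOn
      (fun x _ => ⟨hu, Set.mem_univ _⟩)
  refine ⟨(1 - Real.exp (-C')) * max M 0, fun n t => ?_⟩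
  have hcn : Continuous (fun x => σ (a n)⁻¹ x) := hσcont _ (inv_pos.mpr (ha n))
  have factor : 0 ≤ 1 - Real.exp (-C') := by
    have := Real.exp_le_one_iff.mpr (neg_nonpos.mpr hC'0); linarith
  have hb1 : ∀ x : X, |1 - Real.exp (-f (t, σ (a n)⁻¹ x))| ≤ 1 := by
    intro x
    have h1 : Real.exp (-f (t, σ (a n)⁻¹ x)) ≤ 1 :=
      Real.exp_le_one_iff.mpr (neg_nonpos.mpr (hf0 _))
    have h2 : 0 < Real.exp (-f (t, σ (a n)⁻¹ x)) := Real.exp_pos _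
    rw [abs_le]; constructor <;> nlinarith
  have hb2 : ∀ x : X, |(1 - Real.exp (-C')) * g (σ (a n)⁻¹ x)| ≤ 1 := by
    intro x
    have hg := hg01 (σ (a n)⁻¹ x)
    have hE : Real.exp (-C') ≤ 1 := Real.exp_le_one_iff.mpr (neg_nonpos.mpr hC'0)
    have hEp : (0:ℝ) < Real.exp (-C') := Real.exp_pos _
    rw [abs_of_nonneg (mul_nonneg factor hg.1)]
    nlinarith [hg.1, hg.2]
  have hintmono : (∫ x, (1 - Real.exp (-f (t, σ (a n)⁻¹ x))) ∂ν)
      ≤ ∫ x, (1 - Real.exp (-C')) * g (σ (a n)⁻¹ x) ∂ν := by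
    apply integral_mono
    · exact hint _ (continuous_const.sub
        ((hfc.comp ((Continuous.prodMk_right t).comp hcn)).neg.rexp)) hb1
    · exact hint _ (continuous_const.mul (hgc.comp hcn)) hb2
    · intro x; exact hkey t (σ (a n)⁻¹ x)
  calc (n : ℝ) * ∫ x, (1 - Real.exp (-f (t, σ (a n)⁻¹ x))) ∂ν
      ≤ (n : ℝ) * ∫ x, (1 - Real.exp (-C')) * g (σ (a n)⁻¹ x) ∂ν :=
        mul_le_mul_of_nonneg_left hintmono (Nat.cast_nonneg n)
    _ = (1 - Real.exp (-C')) * ((n : ℝ) * ∫ x, g (σ (a n)⁻¹ x) ∂ν) := by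
        rw [integral_const_mul]; ring
    _ ≤ (1 - Real.exp (-C')) * max M 0 := by
        apply mul_le_mul_of_nonneg_left _ factor
        exact le_trans (hMmem n) (le_max_left _ _)
end

section
/- Let 𝒯 be a complete separable metric space, (Ω,𝒜,P) a probability space, N : Ω → ℕ a random variable with E[N] < ∞, and T_1, T_2, … : Ω → 𝒯 random elements. Let M ≥ 0 and let g_n (n ≥ 1) and g be Borel functions from 𝒯 to [0,M] with g_n(t) → g(t) as n → ∞ for every t ∈ 𝒯. Then n·(1 − E[exp(−(1/n)·Σ_{i=1}^{N} g_n(T_i))]) → E[Σ_{i=1}^{N} g(T_i)] as n → ∞. In particular, if λ is the intensity measure of the point process Σ_{i=1}^{N} ε_{T_i}, i.e. λ(A) = E[#{1 ≤ i ≤ N : T_i ∈ A}] for Borel A, the limit equals ∫_𝒯 g dλ. -/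
open MeasureTheory Filter Metric Topology

lemma aux_meas {Ω β : Type*} [MeasurableSpace Ω] [MeasurableSpace β]
    (N : Ω → ℕ) (hN : Measurable N) (f : ℕ → Ω → β) (hf : ∀ m, Measurable (f m)) :
    Measurable fun ω => f (N ω) ω := by
  have h : Measurable fun p : Ω × ℕ => f p.2 p.1 :=
    measurable_from_prod_countable_left fun m => hf m
  exact h.comp (measurable_id.prodMk hN)

lemma aux_lim (x : ℕ → ℝ) (L : ℝ) (hx0 : ∀ n, 0 ≤ x n)
    (hx : Tendsto x atTop (𝓝 L)) :
    Tendsto (fun n : ℕ => (n : ℝ) * (1 - Real.exp (-(1 / (n : ℝ)) * x n))) atTop (𝓝 L) := by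
  have hinv : Tendsto (fun n : ℕ => 1 / (n : ℝ)) atTop (𝓝 0) :=
    tendsto_one_div_atTop_nhds_zero_nat
  have hlo : Tendsto (fun n : ℕ => x n / (1 + x n * (1 / (n : ℝ)))) atTop (𝓝 L) := by
    have hd : Tendsto (fun n : ℕ => 1 + x n * (1 / (n : ℝ))) atTop (𝓝 (1 + L * 0)) :=
      tendsto_const_nhds.add (hx.mul hinv)
    have := hx.div hd (by norm_num)
    simp only [mul_zero, add_zero, div_one] at this
    exact this
  refine tendsto_of_tendsto_of_tendsto_of_le_of_le' hlo hx ?_ ?_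
  · filter_upwards [eventually_ge_atTop 1] with n hn
    have hn0 : (0 : ℝ) < n := by exact_mod_cast hn
    set y := x n / n with hy_def
    have hy : 0 ≤ y := div_nonneg (hx0 n) hn0.le
    have h1y : (0 : ℝ) < 1 + y := by linarith
    have h1 : Real.exp (-y) ≤ (1 + y)⁻¹ := by
      rw [Real.exp_neg]
      exact inv_anti₀ h1y (by
        have := Real.add_one_le_exp y; linarith)
    have h2 : y / (1 + y) ≤ 1 - Real.exp (-y) := by
      have : 1 - (1 + y)⁻¹ = y / (1 + y) := by field_simp; ring
      linarith [this ▸ sub_le_sub_left h1 1]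
    have hxy : -(1 / (n : ℝ)) * x n = -y := by
      rw [hy_def]; field_simp
    rw [hxy]
    have h3 : (n : ℝ) * (y / (1 + y)) ≤ (n : ℝ) * (1 - Real.exp (-y)) :=
      mul_le_mul_of_nonneg_left h2 hn0.le
    have h4 : (n : ℝ) * (y / (1 + y)) = x n / (1 + x n * (1 / (n : ℝ))) := by
      rw [hy_def]; field_simp
    linarith [h4 ▸ h3]
  · filter_upwards [eventually_ge_atTop 1] with n hn
    have hn0 : (0 : ℝ) < n := by exact_mod_cast hn
    set y := x n / n with hy_def
    have h1 : 1 - Real.exp (-y) ≤ y := by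
      have := Real.add_one_le_exp (-y); linarith
    have hxy : -(1 / (n : ℝ)) * x n = -y := by rw [hy_def]; field_simp
    rw [hxy]
    calc (n : ℝ) * (1 - Real.exp (-y)) ≤ n * y := mul_le_mul_of_nonneg_left h1 hn0.le
      _ = x n := by rw [hy_def]; field_simp

lemma aux_tsum_indicator {Ω : Type*} (N : Ω → ℕ) (h : ℕ → Ω → ENNReal) (ω : Ω) :
    ∑' i, Set.indicator {ω' | i < N ω'} (h i) ω = ∑ i ∈ Finset.range (N ω), h i ω := by
  rw [tsum_eq_sum (s := Finset.range (N ω))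
    (fun i hi => Set.indicator_of_notMem (by simpa using hi) _)]
  exact Finset.sum_congr rfl fun i hi =>
    Set.indicator_of_mem (by simpa using Finset.mem_range.mp hi) _

lemma aux_lam {T : Type*} [MeasurableSpace T]
    {Ω : Type*} [MeasurableSpace Ω] (P : Measure Ω)
    (N : Ω → ℕ) (hNmeas : Measurable N)
    (Tt : ℕ → Ω → T) (hTmeas : ∀ i, Measurable (Tt i))
    (lam : Measure T)
    (hlam : ∀ A : Set T, MeasurableSet A →
      lam A = ∫⁻ ω, ∑ i ∈ Finset.range (N ω),
        Set.indicator A (fun _ => (1 : ENNReal)) (Tt i ω) ∂P)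
    (G : T → ENNReal) (hG : Measurable G) :
    ∫⁻ t, G t ∂lam = ∫⁻ ω, ∑ i ∈ Finset.range (N ω), G (Tt i ω) ∂P := by
  have hset : ∀ i, MeasurableSet {ω | i < N ω} := fun i => hNmeas measurableSet_Ioi
  have key : lam = Measure.sum (fun i => (P.restrict {ω | i < N ω}).map (Tt i)) := by
    ext A hA
    rw [hlam A hA, Measure.sum_apply _ hA]
    have h1 : ∀ ω, (∑ i ∈ Finset.range (N ω),
        Set.indicator A (fun _ => (1 : ENNReal)) (Tt i ω)) =
        ∑' i, Set.indicator {ω' | i < N ω'}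
          (fun ω' => Set.indicator A (fun _ => (1 : ENNReal)) (Tt i ω')) ω :=
      fun ω => (aux_tsum_indicator N (fun i ω' => Set.indicator A (fun _ => (1 : ENNReal)) (Tt i ω')) ω).symm
    simp_rw [h1]
    have hfmeas : ∀ i, AEMeasurable (fun ω => Set.indicator {ω' | i < N ω'}
        (fun ω' => Set.indicator A (fun _ => (1 : ENNReal)) (Tt i ω')) ω) P := fun i =>
      (((measurable_const.indicator hA).comp (hTmeas i)).indicator (hset i)).aemeasurable
    rw [lintegral_tsum hfmeas]
    refine tsum_congr fun i => ?_
    rw [lintegral_indicator (hset i) _, Measure.map_apply (hTmeas i) hA,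
      lintegral_indicator_const_comp (hTmeas i) hA, one_mul]
  rw [key, lintegral_sum_measure]
  calc (∑' i, ∫⁻ t, G t ∂((P.restrict {ω | i < N ω}).map (Tt i)))
      = ∑' i, ∫⁻ ω in {ω | i < N ω}, G (Tt i ω) ∂P :=
        tsum_congr fun i => lintegral_map hG (hTmeas i)
    _ = ∑' i, ∫⁻ ω, Set.indicator {ω' | i < N ω'} (fun ω' => G (Tt i ω')) ω ∂P :=
        tsum_congr fun i => (lintegral_indicator (hset i) (fun ω' => G (Tt i ω'))).symm
    _ = ∫⁻ ω, ∑' i, Set.indicator {ω' | i < N ω'} (fun ω' => G (Tt i ω')) ω ∂P :=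
        (lintegral_tsum (f := fun i ω => Set.indicator {ω' | i < N ω'}
          (fun ω' => G (Tt i ω)) ω) (fun i =>
          ((hG.comp (hTmeas i)).indicator (hset i)).aemeasurable)).symm
    _ = ∫⁻ ω, ∑ i ∈ Finset.range (N ω), G (Tt i ω) ∂P := by
        refine lintegral_congr fun ω => ?_
        exact aux_tsum_indicator N (fun i ω' => G (Tt i ω')) ω

/-- Derivative-type limit for the Laplace functional of a finite point process
(Lemma 5.4 of the paper): `n(1 − L_Ψ(g_n/n)) → ∫ g dλ = E[Σ_{i=1}^N g(T_i)]`. -/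
theorem stmt_6
    {T : Type*} [MetricSpace T] [CompleteSpace T] [TopologicalSpace.SeparableSpace T]
    [MeasurableSpace T] [BorelSpace T]
    {Ω : Type*} [MeasurableSpace Ω] (P : Measure Ω) [IsProbabilityMeasure P]
    (N : Ω → ℕ) (hNmeas : Measurable N) (hNint : Integrable (fun ω => (N ω : ℝ)) P)
    (Tt : ℕ → Ω → T) (hTmeas : ∀ i, Measurable (Tt i))
    (M : ℝ) (hM : 0 ≤ M)
    (g : T → ℝ) (gn : ℕ → T → ℝ)
    (hgmeas : Measurable g) (hgnmeas : ∀ n, Measurable (gn n))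
    (hgrange : ∀ t, g t ∈ Set.Icc 0 M) (hgnrange : ∀ n t, gn n t ∈ Set.Icc 0 M)
    (hconv : ∀ t, Tendsto (fun n : ℕ => gn n t) atTop (𝓝 (g t)))
    (lam : Measure T)
    (hlam : ∀ A : Set T, MeasurableSet A →
      lam A = ∫⁻ ω, ∑ i ∈ Finset.range (N ω),
        Set.indicator A (fun _ => (1 : ENNReal)) (Tt i ω) ∂P) :
    Tendsto (fun n : ℕ => (n : ℝ) *
        (1 - ∫ ω, Real.exp (-(1 / (n : ℝ)) * ∑ i ∈ Finset.range (N ω), gn n (Tt i ω)) ∂P))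
      atTop (𝓝 (∫ ω, ∑ i ∈ Finset.range (N ω), g (Tt i ω) ∂P))
    ∧ (∫ ω, ∑ i ∈ Finset.range (N ω), g (Tt i ω) ∂P) = ∫ t, g t ∂lam := by
  -- notation
  set Sn : ℕ → Ω → ℝ := fun n ω => ∑ i ∈ Finset.range (N ω), gn n (Tt i ω) with hSn_def
  set S : Ω → ℝ := fun ω => ∑ i ∈ Finset.range (N ω), g (Tt i ω) with hS_def
  -- measurability
  have hSnmeas : ∀ n, Measurable (Sn n) := fun n =>
    aux_meas N hNmeas (fun m ω => ∑ i ∈ Finset.range m, gn n (Tt i ω))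
      (fun m => Finset.measurable_sum _ fun i _ => (hgnmeas n).comp (hTmeas i))
  have hSmeas : Measurable S :=
    aux_meas N hNmeas (fun m ω => ∑ i ∈ Finset.range m, g (Tt i ω))
      (fun m => Finset.measurable_sum _ fun i _ => hgmeas.comp (hTmeas i))
  -- bounds
  have hSn0 : ∀ n ω, 0 ≤ Sn n ω := fun n ω =>
    Finset.sum_nonneg fun i _ => (hgnrange n (Tt i ω)).1
  have hSnle : ∀ n ω, Sn n ω ≤ M * N ω := by
    intro n ω
    calc Sn n ω ≤ ∑ _i ∈ Finset.range (N ω), M :=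
          Finset.sum_le_sum fun i _ => (hgnrange n (Tt i ω)).2
      _ = M * N ω := by simp [mul_comm]
  have hS0 : ∀ ω, 0 ≤ S ω := fun ω =>
    Finset.sum_nonneg fun i _ => (hgrange (Tt i ω)).1
  have hSle : ∀ ω, S ω ≤ M * N ω := by
    intro ω
    calc S ω ≤ ∑ _i ∈ Finset.range (N ω), M :=
          Finset.sum_le_sum fun i _ => (hgrange (Tt i ω)).2
      _ = M * N ω := by simp [mul_comm]
  have hbndint : Integrable (fun ω => M * (N ω : ℝ)) P := hNint.const_mul M
  -- integrability of S
  have hSint : Integrable S P := by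
    refine hbndint.mono' hSmeas.aestronglyMeasurable (ae_of_all _ fun ω => ?_)
    rw [Real.norm_eq_abs, abs_of_nonneg (hS0 ω)]
    exact hSle ω
  -- integrability of the exponential terms
  have hexpmeas : ∀ n : ℕ, Measurable (fun ω => Real.exp (-(1 / (n : ℝ)) * Sn n ω)) :=
    fun n => Real.measurable_exp.comp ((measurable_const.mul (hSnmeas n)))
  have hexpint : ∀ n : ℕ, Integrable (fun ω => Real.exp (-(1 / (n : ℝ)) * Sn n ω)) P := by
    intro n
    refine (integrable_const (1 : ℝ)).mono' (hexpmeas n).aestronglyMeasurable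
      (ae_of_all _ fun ω => ?_)
    rw [Real.norm_eq_abs, abs_of_pos (Real.exp_pos _)]
    calc Real.exp (-(1 / (n : ℝ)) * Sn n ω) ≤ Real.exp 0 := by
          apply Real.exp_le_exp.mpr
          have h1 : (0 : ℝ) ≤ 1 / (n : ℝ) := by positivity
          nlinarith [hSn0 n ω]
      _ = 1 := Real.exp_zero
  -- the prelimit equals an integral
  have key1 : ∀ n : ℕ, (n : ℝ) * (1 - ∫ ω, Real.exp (-(1 / (n : ℝ)) * Sn n ω) ∂P)
      = ∫ ω, (n : ℝ) * (1 - Real.exp (-(1 / (n : ℝ)) * Sn n ω)) ∂P := by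
    intro n
    rw [integral_const_mul, integral_sub (integrable_const 1) (hexpint n)]
    simp
  -- dominated convergence
  have part1 : Tendsto (fun n : ℕ =>
      ∫ ω, (n : ℝ) * (1 - Real.exp (-(1 / (n : ℝ)) * Sn n ω)) ∂P) atTop (𝓝 (∫ ω, S ω ∂P)) := by
    refine tendsto_integral_of_dominated_convergence (fun ω => M * (N ω : ℝ))
      (fun n => (measurable_const.mul
        (measurable_const.sub (hexpmeas n))).aestronglyMeasurable)
      hbndint ?_ ?_
    · intro n
      refine ae_of_all _ fun ω => ?_
      rcases Nat.eq_zero_or_pos n with rfl | hn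
      · simp only [Nat.cast_zero, zero_mul, norm_zero]
        exact mul_nonneg hM (Nat.cast_nonneg _)
      have hn0 : (0 : ℝ) < n := by exact_mod_cast hn
      have hy0 : 0 ≤ (1 / (n : ℝ)) * Sn n ω := mul_nonneg (by positivity) (hSn0 n ω)
      have hexp1 : Real.exp (-(1 / (n : ℝ)) * Sn n ω) ≤ 1 := by
        have h := Real.exp_le_exp.mpr (show -(1 / (n : ℝ)) * Sn n ω ≤ 0 by nlinarith)
        rwa [Real.exp_zero] at h
      have hlow : 1 - ((1 / (n : ℝ)) * Sn n ω) ≤ Real.exp (-(1 / (n : ℝ)) * Sn n ω) := by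
        have := Real.add_one_le_exp (-(1 / (n : ℝ)) * Sn n ω)
        linarith
      have hnn : 0 ≤ (n : ℝ) * (1 - Real.exp (-(1 / (n : ℝ)) * Sn n ω)) := by
        apply mul_nonneg hn0.le; linarith
      rw [Real.norm_eq_abs, abs_of_nonneg hnn]
      calc (n : ℝ) * (1 - Real.exp (-(1 / (n : ℝ)) * Sn n ω))
          ≤ (n : ℝ) * ((1 / (n : ℝ)) * Sn n ω) := by
            apply mul_le_mul_of_nonneg_left _ hn0.le
            linarith
        _ = Sn n ω := by field_simp
        _ ≤ M * N ω := hSnle n ω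
    · refine ae_of_all _ fun ω => ?_
      exact aux_lim (fun n => Sn n ω) (S ω) (fun n => hSn0 n ω)
        (tendsto_finset_sum _ fun i _ => hconv (Tt i ω))
  have main1 : Tendsto (fun n : ℕ => (n : ℝ) *
      (1 - ∫ ω, Real.exp (-(1 / (n : ℝ)) * Sn n ω) ∂P)) atTop (𝓝 (∫ ω, S ω ∂P)) := by
    simp_rw [key1]; exact part1
  refine ⟨main1, ?_⟩
  -- second part: identification with ∫ g dλ
  set G : T → ENNReal := fun t => ENNReal.ofReal (g t) with hG_def
  have hGmeas : Measurable G := ENNReal.measurable_ofReal.comp hgmeas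
  have hlint := aux_lam P N hNmeas Tt hTmeas lam hlam G hGmeas
  have hofS : ∀ ω, ENNReal.ofReal (S ω) = ∑ i ∈ Finset.range (N ω), G (Tt i ω) := by
    intro ω
    rw [hS_def]
    exact ENNReal.ofReal_sum_of_nonneg fun i _ => (hgrange (Tt i ω)).1
  rw [integral_eq_lintegral_of_nonneg_ae (ae_of_all _ hS0) hSmeas.aestronglyMeasurable,
    integral_eq_lintegral_of_nonneg_ae (ae_of_all _ fun t => (hgrange t).1)
      hgmeas.aestronglyMeasurable]
  congr 1
  calc ∫⁻ a, ENNReal.ofReal (S a) ∂P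
      = ∫⁻ ω, ∑ i ∈ Finset.range (N ω), G (Tt i ω) ∂P := lintegral_congr hofS
    _ = ∫⁻ t, G t ∂lam := hlint.symm
end

section
/- Suppose in addition that 𝒯 is locally compact, let ν be a Borel probability measure on 𝒳 with ν({0}) = 0 that is regularly varying with scaling sequence (a_n) and limit measure μ, and let f : 𝒯×𝒳 → [0,∞) be bounded and Lipschitz continuous (with respect to the sum metric on 𝒯×𝒳) with f(t,x) = 0 whenever d(0,x) < r_0, for some r_0 > 0. Then the function (Lf)(t) := ∫_𝒳 (1 − e^{−f(t,x)}) μ(dx) is continuous on 𝒯 and (L_n f)(t) := n·∫_𝒳 (1 − e^{−f(t, a_n⁻¹•x)}) ν(dx) converges to (Lf)(t) uniformly on 𝒯 as n → ∞. -/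
open MeasureTheory Filter Metric Topology

/-- `|e^{-p} - e^{-q}| ≤ |p - q|` for nonnegative `p, q`. -/
lemma stmt7_exp_aux {p q : ℝ} (hp : 0 ≤ p) (hq : 0 ≤ q) :
    |Real.exp (-p) - Real.exp (-q)| ≤ |p - q| := by
  wlog h : q ≤ p with H
  · rw [abs_sub_comm, abs_sub_comm p q]
    exact H hq hp (le_of_not_ge h)
  · have hle : Real.exp (-p) ≤ Real.exp (-q) := Real.exp_le_exp.mpr (by linarith)
    rw [abs_of_nonpos (by linarith), abs_of_nonneg (by linarith)]
    have h1 : Real.exp (-q) * Real.exp (-(p - q)) = Real.exp (-p) := by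
      rw [← Real.exp_add]; ring_nf
    have h2 : -(p - q) + 1 ≤ Real.exp (-(p - q)) := Real.add_one_le_exp _
    have h3 : Real.exp (-q) ≤ 1 := Real.exp_le_one_iff.mpr (by linarith)
    nlinarith [Real.exp_pos (-q), Real.exp_pos (-(p - q))]

set_option maxHeartbeats 1000000 in
/-- Uniform convergence of `L_n f` to the continuous limit `Lf` for Lipschitz `f`
when `𝒯` is locally compact (Lemma 5.5 of the paper). -/
theorem stmt_7
    {T : Type*} [MetricSpace T] [CompleteSpace T] [TopologicalSpace.SeparableSpace T]
    [LocallyCompactSpace T]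
    {X : Type*} [MetricSpace X] [CompleteSpace X] [TopologicalSpace.SeparableSpace X]
    [MeasurableSpace X] [BorelSpace X]
    (x0 : X) (σ : ℝ → X → X)
    (hσc : ContinuousOn (fun p : ℝ × X => σ p.1 p.2) (Set.Ioi (0 : ℝ) ×ˢ Set.univ))
    (hσ1 : ∀ x, σ 1 x = x)
    (hσm : ∀ u v : ℝ, 0 < u → 0 < v → ∀ x, σ u (σ v x) = σ (u * v) x)
    (hσ0 : ∀ u : ℝ, 0 < u → σ u x0 = x0)
    (ν : Measure X) [IsProbabilityMeasure ν] (hν0 : ν {x0} = 0)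
    (a : ℕ → ℝ) (ha : ∀ n, 0 < a n) (haTop : Tendsto a atTop atTop)
    (μ : Measure X) (hμ0 : μ ≠ 0)
    (hμFin : ∀ r > (0 : ℝ), μ {x | r ≤ dist x0 x} ≠ ⊤)
    (hRV : ∀ h : X → ℝ, Continuous h → (∃ C, ∀ x, |h x| ≤ C) →
      (∃ ρ > (0 : ℝ), ∀ x, dist x0 x < ρ → h x = 0) →
      Tendsto (fun n : ℕ => (n : ℝ) * ∫ x, h (σ (a n)⁻¹ x) ∂ν) atTop (𝓝 (∫ x, h x ∂μ)))
    (f : T × X → ℝ) (hf0 : ∀ z, 0 ≤ f z) (hfb : ∃ C, ∀ z, f z ≤ C)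
    (hfLip : ∃ K : NNReal, LipschitzWith K f)
    (r0 : ℝ) (hr0 : 0 < r0) (hfvan : ∀ t x, dist x0 x < r0 → f (t, x) = 0) :
    Continuous (fun t : T => ∫ x, (1 - Real.exp (-f (t, x))) ∂μ)
    ∧ TendstoUniformly
        (fun n : ℕ => fun t : T => (n : ℝ) * ∫ x, (1 - Real.exp (-f (t, σ (a n)⁻¹ x))) ∂ν)
        (fun t : T => ∫ x, (1 - Real.exp (-f (t, x))) ∂μ) atTop := by
  classical
  obtain ⟨K, hK⟩ := hfLip
  have hfc : Continuous f := hK.continuous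
  set g : T → X → ℝ := fun t x => 1 - Real.exp (-f (t, x)) with hgdef
  have hg0 : ∀ t x, 0 ≤ g t x := fun t x => by
    simp only [hgdef, sub_nonneg]
    exact Real.exp_le_one_iff.mpr (neg_nonpos.mpr (hf0 _))
  have hg1 : ∀ t x, g t x ≤ 1 := fun t x => by
    simp only [hgdef]
    have := Real.exp_pos (-f (t, x)); linarith
  have hgabs : ∀ t x, |g t x| ≤ 1 := fun t x =>
    abs_le.mpr ⟨by linarith [hg0 t x], hg1 t x⟩
  have hgdist : ∀ (t s : T) (x y : X),
      |g t x - g s y| ≤ (K : ℝ) * dist (t, x) ((s, y) : T × X) := by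
    intro t s x y
    have h1 : g t x - g s y = Real.exp (-f (s, y)) - Real.exp (-f (t, x)) := by
      simp only [hgdef]; ring
    rw [h1]
    refine (stmt7_exp_aux (hf0 _) (hf0 _)).trans ?_
    rw [abs_sub_comm, ← Real.dist_eq]
    exact hK.dist_le_mul _ _
  have hgx : ∀ (t : T) (x y : X), |g t x - g t y| ≤ (K : ℝ) * dist x y := by
    intro t x y
    refine (hgdist t t x y).trans (le_of_eq ?_)
    have hd : dist (t, x) ((t, y) : T × X) = dist x y := by
      rw [Prod.dist_eq, dist_self]
      exact sup_eq_right.mpr dist_nonneg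
    rw [hd]
  have hgt : ∀ (t s : T) (x : X), |g t x - g s x| ≤ (K : ℝ) * dist t s := by
    intro t s x
    refine (hgdist t s x x).trans (le_of_eq ?_)
    have hd : dist (t, x) ((s, x) : T × X) = dist t s := by
      rw [Prod.dist_eq, dist_self]
      exact sup_eq_left.mpr dist_nonneg
    rw [hd]
  have hgvan : ∀ (t : T) (x : X), dist x0 x < r0 → g t x = 0 := by
    intro t x hx; simp [hgdef, hfvan t x hx]
  have hgcont : ∀ t : T, Continuous (fun x => g t x) := by
    intro t
    exact continuous_const.sub
      (Real.continuous_exp.comp ((hfc.comp (Continuous.prodMk_right t)).neg))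
  -- measurability of annuli
  have measA : ∀ r : ℝ, MeasurableSet {x : X | r ≤ dist x0 x} := fun r =>
    (isClosed_le continuous_const (continuous_const.dist continuous_id)).measurableSet
  -- integrability over μ for bounded functions vanishing near x0
  have intμ : ∀ (φ : X → ℝ) (c ρ : ℝ), 0 < ρ → Continuous φ → (∀ x, |φ x| ≤ c) →
      (∀ x, dist x0 x < ρ → φ x = 0) → Integrable φ μ := by
    intro φ c ρ hρ hφ hb hvan
    refine Integrable.mono' (g := Set.indicator {x | ρ ≤ dist x0 x} (fun _ => c)) ?_
      hφ.aestronglyMeasurable (ae_of_all _ ?_)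
    · rw [integrable_indicator_iff (measA ρ)]
      exact integrableOn_const (hμFin ρ hρ)
    · intro x
      by_cases hx : ρ ≤ dist x0 x
      · rw [Set.indicator_of_mem (show x ∈ {x : X | ρ ≤ dist x0 x} from hx)]
        simpa using hb x
      · rw [Set.indicator_of_notMem (show x ∉ {x : X | ρ ≤ dist x0 x} from hx)]
        simp [hvan x (lt_of_not_ge hx)]
  -- integrability over ν of composed bounded continuous functions
  have hσn : ∀ n : ℕ, Continuous (fun x : X => σ (a n)⁻¹ x) := by
    intro n
    exact hσc.comp_continuous (continuous_const.prodMk continuous_id)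
      (fun x => ⟨Set.mem_Ioi.mpr (inv_pos.mpr (ha n)), trivial⟩)
  have intν : ∀ (φ : X → ℝ) (c : ℝ), Continuous φ → (∀ x, |φ x| ≤ c) →
      ∀ n : ℕ, Integrable (fun x => φ (σ (a n)⁻¹ x)) ν := by
    intro φ c hφ hb n
    exact Integrable.mono' (integrable_const c) ((hφ.comp (hσn n)).aestronglyMeasurable)
      (ae_of_all _ fun x => by simpa using hb _)
  have intgμ : ∀ t : T, Integrable (fun x => g t x) μ := fun t =>
    intμ _ 1 r0 hr0 (hgcont t) (hgabs t) (hgvan t)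
  -- the bump function φ0
  set φ0 : X → ℝ := fun x => min 1 ((2 / r0) * max 0 (dist x0 x - r0 / 2)) with hφ0def
  have hφ0c : Continuous φ0 := by
    apply continuous_const.min
    exact continuous_const.mul (continuous_const.max
      ((continuous_const.dist continuous_id).sub continuous_const))
  have hφ0nn : ∀ x, 0 ≤ φ0 x := by
    intro x
    refine le_min one_pos.le ?_
    positivity
  have hφ0le1 : ∀ x, φ0 x ≤ 1 := fun x => min_le_left _ _
  have hφ0b : ∀ x, |φ0 x| ≤ 1 := fun x => abs_le.mpr ⟨by linarith [hφ0nn x], hφ0le1 x⟩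
  have hφ0van : ∀ x, dist x0 x < r0 / 2 → φ0 x = 0 := by
    intro x hx
    have : max 0 (dist x0 x - r0 / 2) = 0 := max_eq_left (by linarith)
    simp only [hφ0def, this, mul_zero]
    exact min_eq_right zero_le_one
  have hφ0one : ∀ x, r0 ≤ dist x0 x → φ0 x = 1 := by
    intro x hx
    have h1 : max 0 (dist x0 x - r0 / 2) = dist x0 x - r0 / 2 := max_eq_right (by linarith)
    have h2 : (1 : ℝ) ≤ (2 / r0) * (dist x0 x - r0 / 2) := by
      rw [show (1 : ℝ) = (2 / r0) * (r0 / 2) by field_simp]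
      have h20 : 0 < 2 / r0 := by positivity
      exact mul_le_mul_of_nonneg_left (by linarith) h20.le
    simp only [hφ0def, h1]
    exact min_eq_left h2
  have intφ0μ : Integrable φ0 μ := intμ φ0 1 (r0 / 2) (half_pos hr0) hφ0c hφ0b hφ0van
  set Mφ : ℝ := ∫ x, φ0 x ∂μ with hMφdef
  have hMφ0 : 0 ≤ Mφ := integral_nonneg hφ0nn
  -- difference of integrals bounded by integral of a pointwise bound
  have key_int : ∀ (ρ : Measure X) (u v b : X → ℝ), Integrable u ρ → Integrable v ρ →
      Integrable b ρ → (∀ x, |u x - v x| ≤ b x) →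
      |∫ x, u x ∂ρ - ∫ x, v x ∂ρ| ≤ ∫ x, b x ∂ρ := by
    intro ρ u v b hu hv hb hpt
    rw [← integral_sub hu hv]
    calc |∫ x, (u x - v x) ∂ρ| ≤ ∫ x, |u x - v x| ∂ρ := by
          simpa [Real.norm_eq_abs] using norm_integral_le_integral_norm (fun x => u x - v x) (μ := ρ)
      _ ≤ ∫ x, b x ∂ρ := integral_mono (hu.sub hv).abs hb hpt
  -- Continuity of L
  have hLdiff : ∀ t s : T, |(∫ x, g t x ∂μ) - ∫ x, g s x ∂μ|
      ≤ ((K : ℝ) * (μ {x | r0 ≤ dist x0 x}).toReal) * dist t s := by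
    intro t s
    have hbint : Integrable (Set.indicator {x | r0 ≤ dist x0 x}
        (fun _ => (K : ℝ) * dist t s)) μ := by
      rw [integrable_indicator_iff (measA r0)]
      exact integrableOn_const (hμFin r0 hr0)
    have hpt : ∀ x, |g t x - g s x| ≤ Set.indicator {x | r0 ≤ dist x0 x}
        (fun _ => (K : ℝ) * dist t s) x := by
      intro x
      by_cases hx : r0 ≤ dist x0 x
      · rw [Set.indicator_of_mem (show x ∈ {x : X | r0 ≤ dist x0 x} from hx)]
        exact hgt t s x
      · rw [Set.indicator_of_notMem (show x ∉ {x : X | r0 ≤ dist x0 x} from hx)]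
        simp [hgvan t x (lt_of_not_ge hx), hgvan s x (lt_of_not_ge hx)]
    refine (key_int μ _ _ _ (intgμ t) (intgμ s) hbint hpt).trans (le_of_eq ?_)
    rw [integral_indicator_const _ (measA r0)]
    simp [smul_eq_mul, measureReal_def]; ring
  have hLcont : Continuous (fun t : T => ∫ x, g t x ∂μ) := by
    have : LipschitzWith (Real.toNNReal ((K : ℝ) * (μ {x | r0 ≤ dist x0 x}).toReal))
        (fun t : T => ∫ x, g t x ∂μ) := by
      refine LipschitzWith.of_dist_le_mul ?_
      intro t s
      rw [Real.dist_eq, Real.coe_toNNReal _ (by positivity)]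
      exact hLdiff t s
    exact this.continuous
  constructor
  · exact hLcont
  -- Uniform convergence
  rw [Metric.tendstoUniformly_iff]
  intro ε hε
  rcases isEmpty_or_nonempty T with hT | hT
  · filter_upwards with n t
    exact (IsEmpty.false t).elim
  haveI : Nonempty X := ⟨x0⟩
  set c : ℕ → X := TopologicalSpace.denseSeq X with hcdef
  have hcdense : DenseRange c := TopologicalSpace.denseRange_denseSeq X
  set A2 : Set X := {x : X | r0 / 2 ≤ dist x0 x} with hA2def
  have hA2fin : μ A2 ≠ ⊤ := hμFin _ (half_pos hr0)
  set ε1 : ℝ := ε / (5 * (Mφ + 1)) with hε1def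
  have hε1 : 0 < ε1 := by positivity
  set η : ℝ := ε1 / (6 * ((K : ℝ) + 1)) with hηdef
  have hη : 0 < η := by positivity
  set ε2 : ℝ := ε / 60 with hε2def
  have hε2 : 0 < ε2 := by positivity
  -- choose finitely many centers capturing most of μ on A2
  set E : ℕ → Set X := fun N => A2 \ ⋃ k ∈ Finset.range N, ball (c k) η with hEdef
  have hEmeas : ∀ N, MeasurableSet (E N) := by
    intro N
    exact ((measA (r0 / 2)).diff (Finset.measurableSet_biUnion _
      (fun k _ => measurableSet_ball)))
  have hEanti : Antitone E := by
    intro N N' hNN'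
    intro x hx
    refine ⟨hx.1, fun hmem => hx.2 ?_⟩
    simp only [Set.mem_iUnion] at hmem ⊢
    obtain ⟨k, hk, hxk⟩ := hmem
    exact ⟨k, Finset.mem_range.mpr (lt_of_lt_of_le (Finset.mem_range.mp hk) hNN'), hxk⟩
  have hEinter : ⋂ N, E N = ∅ := by
    ext x
    simp only [Set.mem_iInter, Set.mem_empty_iff_false, iff_false, not_forall]
    obtain ⟨k, hk⟩ := denseRange_iff.mp hcdense x η hη
    refine ⟨k + 1, ?_⟩
    intro hmem
    exact hmem.2 (Set.mem_biUnion (Finset.self_mem_range_succ k) (by simpa [dist_comm] using hk))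
  have htend : Tendsto (fun N => μ (E N)) atTop (𝓝 0) := by
    have := MeasureTheory.tendsto_measure_iInter_atTop (μ := μ)
      (fun N => (hEmeas N).nullMeasurableSet) hEanti
      ⟨0, fun h => hA2fin (top_le_iff.mp (h ▸ measure_mono Set.diff_subset) ▸ rfl)⟩
    rw [hEinter] at this
    simpa [Function.comp_def] using this
  obtain ⟨M, hM1, hME⟩ : ∃ M : ℕ, 1 ≤ M ∧ μ (E M) < ENNReal.ofReal ε2 := by
    have h1 : ∀ᶠ N in atTop, μ (E N) < ENNReal.ofReal ε2 :=
      htend.eventually (gt_mem_nhds (ENNReal.ofReal_pos.mpr hε2))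
    exact ((eventually_ge_atTop 1).and h1).exists
  have hMEreal : (μ (E M)).toReal < ε2 := by
    have hne : μ (E M) ≠ ⊤ := fun h =>
      hA2fin (top_le_iff.mp (h ▸ measure_mono Set.diff_subset) ▸ rfl)
    exact (ENNReal.lt_ofReal_iff_toReal_lt hne).mp hME
  -- the cut-off function ψ
  set θ : X → ℝ := fun x => ∏ k ∈ Finset.range M, min 1 (max 0 ((dist x (c k) - η) / η))
    with hθdef
  have hθfac_nn : ∀ (x : X) (k : ℕ), (0:ℝ) ≤ min 1 (max 0 ((dist x (c k) - η) / η)) := by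
    intro x k; exact le_min one_pos.le (le_max_left _ _)
  have hθfac_le1 : ∀ (x : X) (k : ℕ), min 1 (max 0 ((dist x (c k) - η) / η)) ≤ 1 := by
    intro x k; exact min_le_left _ _
  have hθnn : ∀ x, 0 ≤ θ x := fun x => Finset.prod_nonneg (fun k _ => hθfac_nn x k)
  have hθle1 : ∀ x, θ x ≤ 1 := fun x =>
    Finset.prod_le_one (fun k _ => hθfac_nn x k) (fun k _ => hθfac_le1 x k)
  have hθc : Continuous θ := by
    refine continuous_finset_prod _ (fun k _ => ?_)
    exact continuous_const.min (continuous_const.max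
      ((((continuous_id.dist continuous_const)).sub continuous_const).div_const η))
  have hθzero : ∀ x, (∃ k ∈ Finset.range M, dist x (c k) < η) → θ x = 0 := by
    rintro x ⟨k, hk, hxk⟩
    refine Finset.prod_eq_zero hk ?_
    have h1 : (dist x (c k) - η) / η ≤ 0 :=
      div_nonpos_of_nonpos_of_nonneg (by linarith) hη.le
    have h2 : max 0 ((dist x (c k) - η) / η) = 0 := max_eq_left h1
    rw [h2]
    exact min_eq_right zero_le_one
  have hθone : ∀ x, (∀ k ∈ Finset.range M, 2 * η ≤ dist x (c k)) → θ x = 1 := by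
    intro x hx
    refine Finset.prod_eq_one (fun k hk => ?_)
    have h1 : (1:ℝ) ≤ (dist x (c k) - η) / η := by
      rw [le_div_iff₀ hη]
      linarith [hx k hk]
    have h2 : max 0 ((dist x (c k) - η) / η) = (dist x (c k) - η) / η :=
      max_eq_right (by linarith)
    rw [h2]
    exact min_eq_left h1
  set ψ : X → ℝ := fun x => min (φ0 x) (θ x) with hψdef
  have hψc : Continuous ψ := hφ0c.min hθc
  have hψnn : ∀ x, 0 ≤ ψ x := fun x => le_min (hφ0nn x) (hθnn x)
  have hψle1 : ∀ x, ψ x ≤ 1 := fun x => (min_le_left _ _).trans (hφ0le1 x)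
  have hψb : ∀ x, |ψ x| ≤ 1 := fun x => abs_le.mpr ⟨by linarith [hψnn x], hψle1 x⟩
  have hψvan : ∀ x, dist x0 x < r0 / 2 → ψ x = 0 := by
    intro x hx
    have := hφ0van x hx
    exact le_antisymm (by rw [hψdef]; simpa [this] using (min_le_left _ _).trans_eq this)
      (hψnn x)
  have intψμ : Integrable ψ μ := intμ ψ 1 (r0 / 2) (half_pos hr0) hψc hψb hψvan
  have hψμ : ∫ x, ψ x ∂μ < ε2 := by
    have hbint : Integrable (Set.indicator (E M) (fun _ => (1:ℝ))) μ := by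
      rw [integrable_indicator_iff (hEmeas M)]
      refine integrableOn_const ?_
      exact fun h => hA2fin (top_le_iff.mp (h ▸ measure_mono Set.diff_subset) ▸ rfl)
    have hpt : ∀ x, ψ x ≤ Set.indicator (E M) (fun _ => (1:ℝ)) x := by
      intro x
      by_cases hx : x ∈ E M
      · rw [Set.indicator_of_mem hx]; exact hψle1 x
      · rw [Set.indicator_of_notMem hx]
        by_cases hxA : x ∈ A2
        · have hxU : x ∈ ⋃ k ∈ Finset.range M, ball (c k) η := by
            by_contra hcon
            exact hx ⟨hxA, hcon⟩
          simp only [Set.mem_iUnion, mem_ball] at hxU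
          obtain ⟨k, hk, hxk⟩ := hxU
          have hθ0 : θ x = 0 := hθzero x ⟨k, hk, hxk⟩
          calc ψ x ≤ θ x := min_le_right _ _
            _ = 0 := hθ0
        · have hxd : dist x0 x < r0 / 2 := lt_of_not_ge (by simpa [hA2def] using hxA)
          rw [hψvan x hxd]
    calc ∫ x, ψ x ∂μ ≤ ∫ x, Set.indicator (E M) (fun _ => (1:ℝ)) x ∂μ :=
          integral_mono intψμ hbint hpt
      _ = (μ (E M)).toReal := by rw [integral_indicator_const _ (hEmeas M)]; simp [measureReal_def]
      _ < ε2 := hMEreal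
  -- finite net of parameters
  set Φ : T → (Fin M → ℝ) := fun t k => g t (c k) with hΦdef
  have hTB : TotallyBounded (Set.range Φ) := by
    refine TotallyBounded.subset ?_
      (isCompact_univ_pi (fun _ : Fin M => isCompact_Icc (a := (0:ℝ)) (b := 1))).totallyBounded
    rintro _ ⟨t, rfl⟩ k _
    exact ⟨hg0 t _, hg1 t _⟩
  obtain ⟨u, hus, hufin, hucov⟩ := totallyBounded_iff_subset.mp hTB _
    (dist_mem_uniformity (show (0:ℝ) < ε1 / 3 by positivity))
  -- total representative function
  set rep : (Fin M → ℝ) → T := fun y =>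
    if hy : ∃ t' : T, Φ t' = y then hy.choose else hT.some with hrepdef
  have hrepΦ : ∀ y ∈ u, Φ (rep y) = y := by
    intro y hy
    have hex : ∃ t' : T, Φ t' = y := hus hy
    simp only [hrepdef, dif_pos hex]
    exact hex.choose_spec
  have hnet : ∀ t : T, ∃ y ∈ u, ∀ x : X,
      (∃ k ∈ Finset.range M, dist x (c k) < 2 * η) → |g t x - g (rep y) x| ≤ ε1 := by
    intro t
    have hmem : Φ t ∈ ⋃ y ∈ u, {x | (x, y) ∈ {p : (Fin M → ℝ) × (Fin M → ℝ) |
        dist p.1 p.2 < ε1 / 3}} := hucov (Set.mem_range_self t)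
    simp only [Set.mem_iUnion, Set.mem_setOf_eq] at hmem
    obtain ⟨y, hy, hdy⟩ := hmem
    refine ⟨y, hy, ?_⟩
    rintro x ⟨k, hk, hxk⟩
    have hkM : (k : ℕ) < M := Finset.mem_range.mp hk
    have hcoord : |g t (c k) - g (rep y) (c k)| ≤ ε1 / 3 := by
      have h1 : dist (Φ t ⟨k, hkM⟩) (y ⟨k, hkM⟩) ≤ dist (Φ t) y := dist_le_pi_dist _ _ _
      have heq : |g t (c k) - g (rep y) (c k)|
          = dist (Φ t ⟨k, hkM⟩) (Φ (rep y) ⟨k, hkM⟩) := (Real.dist_eq _ _).symm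
      rw [heq, hrepΦ y hy]
      exact h1.trans hdy.le
    have hb1 : |g t x - g t (c k)| ≤ (K : ℝ) * (2 * η) :=
      (hgx t x (c k)).trans (mul_le_mul_of_nonneg_left hxk.le K.coe_nonneg)
    have hb2 : |g (rep y) (c k) - g (rep y) x| ≤ (K : ℝ) * (2 * η) := by
      refine (hgx (rep y) (c k) x).trans ?_
      rw [dist_comm]
      exact mul_le_mul_of_nonneg_left hxk.le K.coe_nonneg
    have hKη : (K : ℝ) * (2 * η) ≤ ε1 / 3 := by
      have hpos : (0:ℝ) < (K : ℝ) + 1 := by positivity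
      have h2 : (K:ℝ) * (2 * η) = ((K:ℝ) / ((K:ℝ) + 1)) * (ε1 / 3) := by
        rw [hηdef]; field_simp; ring
      have h3 : (K:ℝ) / ((K:ℝ) + 1) ≤ 1 := by
        rw [div_le_one hpos]; linarith [K.coe_nonneg]
      rw [h2]
      exact mul_le_of_le_one_left (by positivity) h3
    calc |g t x - g (rep y) x|
        = |(g t x - g t (c k)) + (g t (c k) - g (rep y) (c k))
            + (g (rep y) (c k) - g (rep y) x)| := by ring_nf
      _ ≤ |g t x - g t (c k)| + |g t (c k) - g (rep y) (c k)|
            + |g (rep y) (c k) - g (rep y) x| := abs_add_three _ _ _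
      _ ≤ (K : ℝ) * (2 * η) + ε1 / 3 + (K : ℝ) * (2 * η) := by
          gcongr
      _ ≤ ε1 / 3 + ε1 / 3 + ε1 / 3 := by gcongr
      _ = ε1 := by ring
  -- pointwise comparison
  have hcomp : ∀ (t t' : T),
      (∀ x : X, (∃ k ∈ Finset.range M, dist x (c k) < 2 * η) → |g t x - g t' x| ≤ ε1) →
      ∀ x, |g t x - g t' x| ≤ ε1 * φ0 x + 2 * ψ x := by
    intro t t' hnear x
    by_cases hx : dist x0 x < r0
    · rw [hgvan t x hx, hgvan t' x hx]
      simp only [sub_zero, abs_zero]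
      positivity
    · have hφ1 : φ0 x = 1 := hφ0one x (le_of_not_gt hx)
      by_cases hD : ∃ k ∈ Finset.range M, dist x (c k) < 2 * η
      · have := hnear x hD
        have h2 : 0 ≤ ψ x := hψnn x
        rw [hφ1]; linarith
      · push_neg at hD
        have hθ1 : θ x = 1 := hθone x hD
        have hψ1 : ψ x = 1 := by rw [hψdef]; simp [hφ1, hθ1]
        have habs : |g t x - g t' x| ≤ 2 := by
          have h1 := hg0 t x; have h2 := hg1 t x
          have h3 := hg0 t' x; have h4 := hg1 t' x
          rw [abs_le]; constructor <;> linarith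
        rw [hφ1, hψ1]; linarith
  -- limit statements from regular variation
  have hRVφ0 : Tendsto (fun n : ℕ => (n : ℝ) * ∫ x, φ0 (σ (a n)⁻¹ x) ∂ν) atTop (𝓝 Mφ) :=
    hRV φ0 hφ0c ⟨1, hφ0b⟩ ⟨r0 / 2, half_pos hr0, hφ0van⟩
  have hRVψ : Tendsto (fun n : ℕ => (n : ℝ) * ∫ x, ψ (σ (a n)⁻¹ x) ∂ν) atTop
      (𝓝 (∫ x, ψ x ∂μ)) :=
    hRV ψ hψc ⟨1, hψb⟩ ⟨r0 / 2, half_pos hr0, hψvan⟩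
  have hRVg : ∀ t : T, Tendsto (fun n : ℕ => (n : ℝ) * ∫ x, g t (σ (a n)⁻¹ x) ∂ν) atTop
      (𝓝 (∫ x, g t x ∂μ)) := fun t =>
    hRV (fun x => g t x) (hgcont t) ⟨1, hgabs t⟩ ⟨r0, hr0, hgvan t⟩
  -- eventual bounds
  have hEv1 : ∀ᶠ n : ℕ in atTop, (n : ℝ) * ∫ x, φ0 (σ (a n)⁻¹ x) ∂ν ≤ Mφ + 1 :=
    hRVφ0.eventually (eventually_le_nhds (lt_add_one Mφ))
  have hEv2 : ∀ᶠ n : ℕ in atTop, (n : ℝ) * ∫ x, ψ (σ (a n)⁻¹ x) ∂ν ≤ 2 * ε2 :=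
    hRVψ.eventually (eventually_le_nhds (by linarith))
  have hEv3 : ∀ᶠ n : ℕ in atTop, ∀ y ∈ hufin.toFinset,
      |(n : ℝ) * (∫ x, g (rep y) (σ (a n)⁻¹ x) ∂ν) - ∫ x, g (rep y) x ∂μ| < ε / 5 := by
    rw [eventually_all_finset]
    intro y hy
    have := (hRVg (rep y)).eventually (Metric.ball_mem_nhds (∫ x, g (rep y) x ∂μ)
      (show (0:ℝ) < ε / 5 by positivity))
    filter_upwards [this] with n hn
    rw [← Real.dist_eq]
    exact hn
  filter_upwards [hEv1, hEv2, hEv3] with n h1 h2 h3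
  intro t
  obtain ⟨y, hy, hnear⟩ := hnet t
  have hyF : y ∈ hufin.toFinset := hufin.mem_toFinset.mpr hy
  set t' : T := rep y with ht'def
  have hptw : ∀ x, |g t x - g t' x| ≤ ε1 * φ0 x + 2 * ψ x := hcomp t t' hnear
  -- bounds on the μ-side
  have intbnd : Integrable (fun x => ε1 * φ0 x + 2 * ψ x) μ :=
    (intφ0μ.const_mul ε1).add (intψμ.const_mul 2)
  have key1 : |(∫ x, g t x ∂μ) - ∫ x, g t' x ∂μ| ≤ ε1 * Mφ + 2 * (∫ x, ψ x ∂μ) := by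
    refine (key_int μ _ _ _ (intgμ t) (intgμ t') intbnd hptw).trans (le_of_eq ?_)
    rw [integral_add (intφ0μ.const_mul ε1) (intψμ.const_mul 2),
      integral_const_mul, integral_const_mul]
  -- bounds on the ν-side
  have intgν : ∀ s : T, Integrable (fun x => g s (σ (a n)⁻¹ x)) ν := fun s =>
    intν _ 1 (hgcont s) (hgabs s) n
  have intφ0ν : Integrable (fun x => φ0 (σ (a n)⁻¹ x)) ν := intν _ 1 hφ0c hφ0b n
  have intψν : Integrable (fun x => ψ (σ (a n)⁻¹ x)) ν := intν _ 1 hψc hψb n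
  have intbndν : Integrable (fun x => ε1 * φ0 (σ (a n)⁻¹ x) + 2 * ψ (σ (a n)⁻¹ x)) ν :=
    (intφ0ν.const_mul ε1).add (intψν.const_mul 2)
  have key2 : |(n : ℝ) * (∫ x, g t (σ (a n)⁻¹ x) ∂ν)
      - (n : ℝ) * (∫ x, g t' (σ (a n)⁻¹ x) ∂ν)|
      ≤ ε1 * ((n : ℝ) * ∫ x, φ0 (σ (a n)⁻¹ x) ∂ν)
        + 2 * ((n : ℝ) * ∫ x, ψ (σ (a n)⁻¹ x) ∂ν) := by
    have hn0 : (0:ℝ) ≤ (n : ℝ) := Nat.cast_nonneg n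
    have hstep : |(∫ x, g t (σ (a n)⁻¹ x) ∂ν) - ∫ x, g t' (σ (a n)⁻¹ x) ∂ν|
        ≤ ε1 * (∫ x, φ0 (σ (a n)⁻¹ x) ∂ν) + 2 * (∫ x, ψ (σ (a n)⁻¹ x) ∂ν) := by
      refine (key_int ν _ _ _ (intgν t) (intgν t') intbndν
        (fun x => hptw (σ (a n)⁻¹ x))).trans (le_of_eq ?_)
      rw [integral_add (intφ0ν.const_mul ε1) (intψν.const_mul 2),
        integral_const_mul, integral_const_mul]
    calc |(n : ℝ) * (∫ x, g t (σ (a n)⁻¹ x) ∂ν) - (n : ℝ) * (∫ x, g t' (σ (a n)⁻¹ x) ∂ν)|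
        = (n : ℝ) * |(∫ x, g t (σ (a n)⁻¹ x) ∂ν) - ∫ x, g t' (σ (a n)⁻¹ x) ∂ν| := by
          rw [← mul_sub, abs_mul, Nat.abs_cast]
      _ ≤ (n : ℝ) * (ε1 * (∫ x, φ0 (σ (a n)⁻¹ x) ∂ν) + 2 * (∫ x, ψ (σ (a n)⁻¹ x) ∂ν)) :=
          mul_le_mul_of_nonneg_left hstep hn0
      _ = ε1 * ((n : ℝ) * ∫ x, φ0 (σ (a n)⁻¹ x) ∂ν)
            + 2 * ((n : ℝ) * ∫ x, ψ (σ (a n)⁻¹ x) ∂ν) := by ring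
  -- combine
  have hnetconv : |(n : ℝ) * (∫ x, g t' (σ (a n)⁻¹ x) ∂ν) - ∫ x, g t' x ∂μ| < ε / 5 :=
    h3 y hyF
  have hε1Mφ : ε1 * (Mφ + 1) = ε / 5 := by
    have h5 : Mφ + 1 ≠ 0 := by positivity
    rw [hε1def]
    field_simp
  have hfinal : |(∫ x, g t x ∂μ) - (n : ℝ) * (∫ x, g t (σ (a n)⁻¹ x) ∂ν)| < ε := by
    have htri : |(∫ x, g t x ∂μ) - (n : ℝ) * (∫ x, g t (σ (a n)⁻¹ x) ∂ν)|
        ≤ |(∫ x, g t x ∂μ) - ∫ x, g t' x ∂μ|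
          + |(∫ x, g t' x ∂μ) - (n : ℝ) * (∫ x, g t' (σ (a n)⁻¹ x) ∂ν)|
          + |(n : ℝ) * (∫ x, g t' (σ (a n)⁻¹ x) ∂ν)
              - (n : ℝ) * (∫ x, g t (σ (a n)⁻¹ x) ∂ν)| := by
      have := abs_add_three
        ((∫ x, g t x ∂μ) - ∫ x, g t' x ∂μ)
        ((∫ x, g t' x ∂μ) - (n : ℝ) * (∫ x, g t' (σ (a n)⁻¹ x) ∂ν))
        ((n : ℝ) * (∫ x, g t' (σ (a n)⁻¹ x) ∂ν) - (n : ℝ) * (∫ x, g t (σ (a n)⁻¹ x) ∂ν))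
      simpa using this
    have h2' : |(∫ x, g t' x ∂μ) - (n : ℝ) * (∫ x, g t' (σ (a n)⁻¹ x) ∂ν)| < ε / 5 := by
      rw [abs_sub_comm]; exact hnetconv
    have h3' : |(n : ℝ) * (∫ x, g t' (σ (a n)⁻¹ x) ∂ν)
        - (n : ℝ) * (∫ x, g t (σ (a n)⁻¹ x) ∂ν)|
        ≤ ε1 * ((n : ℝ) * ∫ x, φ0 (σ (a n)⁻¹ x) ∂ν)
          + 2 * ((n : ℝ) * ∫ x, ψ (σ (a n)⁻¹ x) ∂ν) := by
      rw [abs_sub_comm]; exact key2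
    have hb1 : ε1 * ((n : ℝ) * ∫ x, φ0 (σ (a n)⁻¹ x) ∂ν) ≤ ε1 * (Mφ + 1) :=
      mul_le_mul_of_nonneg_left h1 hε1.le
    have hb2 : 2 * ((n : ℝ) * ∫ x, ψ (σ (a n)⁻¹ x) ∂ν) ≤ 2 * (2 * ε2) := by linarith
    have hb3 : ε1 * Mφ ≤ ε1 * (Mφ + 1) := by nlinarith
    have hb4 : 2 * (∫ x, ψ x ∂μ) ≤ 2 * ε2 := by linarith
    linarith [htri, key1, h2', h3', hb1, hb2, hb3, hb4, hε1Mφ, hε2def, hε]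
  rw [Real.dist_eq]
  exact hfinal
end

section
/- Let λ be a finite nonzero Borel measure on 𝒯 and let ν be a Borel probability measure on 𝒳 with ν({0}) = 0 that is regularly varying with scaling sequence (a_n) and limit measure μ. Let N be a random variable with Poisson distribution of mean λ(𝒯), let T_1,T_2,… be i.i.d. 𝒯-valued random elements with law λ/λ(𝒯), and let X_1,X_2,… be i.i.d. 𝒳-valued random elements with law ν, with N, (T_i)_{i≥1}, (X_i)_{i≥1} mutually independent (so that Σ_{i=1}^{N} ε_{(T_i,X_i)} is a Poisson point process on 𝒯×𝒳 with intensity λ⊗ν). Then for every bounded continuous f : 𝒯×𝒳 → [0,∞) for which there exists r > 0 with f(t,x) = 0 whenever d(0,x) < r, one has n·E[1 − exp(−Σ_{i=1}^{N} f(T_i, a_n⁻¹•X_i))] → ∫_{𝒯×𝒳} (1 − e^{−f(t,x)}) λ(dt)μ(dx) as n → ∞. -/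
open MeasureTheory Filter Metric Topology

private lemma aux_exp_tsum (x : ℝ) :
    ∑' j : ℕ, x ^ j / (Nat.factorial j : ℝ) = Real.exp x := by
  rw [Real.exp_eq_exp_ℝ, NormedSpace.exp_eq_tsum_div]

private lemma aux_exp_ineq {x : ℝ} (hx : 0 ≤ x) :
    0 ≤ x - (1 - Real.exp (-x)) ∧ x - (1 - Real.exp (-x)) ≤ x ^ 2 := by
  have h1 := Real.add_one_le_exp (-x)
  have h2 := Real.add_one_le_exp x
  have h3 := Real.exp_pos x
  have h4 : Real.exp (-x) = (Real.exp x)⁻¹ := Real.exp_neg x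
  constructor
  · nlinarith
  · have h5 : (Real.exp x)⁻¹ ≤ (x + 1)⁻¹ := by
      apply inv_anti₀ <;> nlinarith
    have h6 : (0:ℝ) < x + 1 := by nlinarith
    have h7 : (x + 1)⁻¹ * (x + 1) = 1 := inv_mul_cancel₀ (ne_of_gt h6)
    nlinarith [sq_nonneg x, mul_pos h6 h6]

private lemma aux_tendsto {c : ℕ → ℝ} {L : ℝ} (hc0 : ∀ n, 0 ≤ c n)
    (hL : Tendsto (fun n : ℕ => (n:ℝ) * c n) atTop (𝓝 L))
    (hcz : Tendsto c atTop (𝓝 0)) :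
    Tendsto (fun n : ℕ => (n:ℝ) * (1 - Real.exp (-(c n)))) atTop (𝓝 L) := by
  have hd0 : Tendsto (fun n : ℕ => (n:ℝ) * (c n - (1 - Real.exp (-(c n))))) atTop (𝓝 0) := by
    have hub : Tendsto (fun n : ℕ => ((n:ℝ) * c n) * c n) atTop (𝓝 0) := by
      have := hL.mul hcz
      simpa using this
    apply squeeze_zero (fun n => ?_) (fun n => ?_) hub
    · have := (aux_exp_ineq (hc0 n)).1
      positivity
    · have h := (aux_exp_ineq (hc0 n)).2
      have : (n:ℝ) * (c n - (1 - Real.exp (-(c n)))) ≤ (n:ℝ) * (c n ^ 2) :=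
        mul_le_mul_of_nonneg_left h (Nat.cast_nonneg n)
      nlinarith [this]
  have := hL.sub hd0
  simp only [sub_zero] at this
  refine this.congr fun n => by ring

private lemma aux_integrable_of_bounded {α : Type*} [MeasurableSpace α] {m : Measure α}
    [IsFiniteMeasure m] {φ : α → ℝ} (hφ : AEStronglyMeasurable φ m) {C : ℝ}
    (hb : ∀ x, |φ x| ≤ C) : Integrable φ m :=
  Integrable.mono' (integrable_const C) hφ (ae_of_all _ fun x => (Real.norm_eq_abs _ ▸ hb x))

private lemma aux_sfinite {X : Type*} [MetricSpace X] [MeasurableSpace X] [BorelSpace X]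
    (x0 : X) (μ : Measure X) (hμFin : ∀ ρ > (0:ℝ), μ {x | ρ ≤ dist x0 x} ≠ ⊤) :
    SFinite μ := by
  haveI h1 : SigmaFinite (μ.restrict {x0}ᶜ) := by
    constructor
    refine ⟨⟨fun n => {x | ((n:ℝ)+1)⁻¹ ≤ dist x0 x} ∪ {x0}, fun _ => trivial, fun n => ?_, ?_⟩⟩
    · rw [Measure.restrict_apply' (measurableSet_singleton x0).compl]
      refine lt_of_le_of_lt (measure_mono ?_) (lt_top_iff_ne_top.2
        (hμFin ((n:ℝ)+1)⁻¹ (by positivity)))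
      rintro x ⟨hx1, hx2⟩
      rcases hx1 with h | h
      · exact h
      · exact absurd h hx2
    · ext x
      simp only [Set.mem_iUnion, Set.mem_union, Set.mem_setOf_eq, Set.mem_singleton_iff,
        Set.mem_univ, iff_true]
      rcases eq_or_ne x x0 with h | h
      · exact ⟨0, Or.inr h⟩
      · have hd : 0 < dist x0 x := dist_pos.2 (Ne.symm h)
        obtain ⟨n, hn⟩ := exists_nat_one_div_lt hd
        exact ⟨n, Or.inl (by rw [← one_div]; exact hn.le)⟩
  haveI h2 : SFinite (μ.restrict {x0}) := by
    rw [Measure.restrict_singleton]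
    infer_instance
  rw [← Measure.restrict_add_restrict_compl (μ := μ) (measurableSet_singleton x0)]
  infer_instance
/-- Regular variation of marked Poisson point processes, Laplace-functional form,
case `k = 0` (Theorem 3.1 of the paper). -/
theorem stmt_11
    {T : Type*} [MetricSpace T] [CompleteSpace T] [TopologicalSpace.SeparableSpace T]
    [MeasurableSpace T] [BorelSpace T]
    {X : Type*} [MetricSpace X] [CompleteSpace X] [TopologicalSpace.SeparableSpace X]
    [MeasurableSpace X] [BorelSpace X]
    (x0 : X) (σ : ℝ → X → X)
    (hσc : ContinuousOn (fun p : ℝ × X => σ p.1 p.2) (Set.Ioi (0 : ℝ) ×ˢ Set.univ))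
    (hσ1 : ∀ x, σ 1 x = x)
    (hσm : ∀ u v : ℝ, 0 < u → 0 < v → ∀ x, σ u (σ v x) = σ (u * v) x)
    (hσ0 : ∀ u : ℝ, 0 < u → σ u x0 = x0)
    (lam : Measure T) [IsFiniteMeasure lam] (hlam0 : lam ≠ 0)
    (ν : Measure X) [IsProbabilityMeasure ν] (hν0 : ν {x0} = 0)
    (a : ℕ → ℝ) (ha : ∀ n, 0 < a n) (haTop : Tendsto a atTop atTop)
    (μ : Measure X) (hμ0 : μ ≠ 0)
    (hμFin : ∀ ρ > (0 : ℝ), μ {x | ρ ≤ dist x0 x} ≠ ⊤)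
    (hRV : ∀ h : X → ℝ, Continuous h → (∃ C, ∀ x, |h x| ≤ C) →
      (∃ ρ > (0 : ℝ), ∀ x, dist x0 x < ρ → h x = 0) →
      Tendsto (fun n : ℕ => (n : ℝ) * ∫ x, h (σ (a n)⁻¹ x) ∂ν) atTop (𝓝 (∫ x, h x ∂μ)))
    {Ω : Type*} [MeasurableSpace Ω] (P : Measure Ω) [IsProbabilityMeasure P]
    (N : Ω → ℕ) (hNmeas : Measurable N)
    (Tt : ℕ → Ω → T) (hTmeas : ∀ i, Measurable (Tt i))
    (Xx : ℕ → Ω → X) (hXmeas : ∀ i, Measurable (Xx i))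
    (hNlaw : ∀ j : ℕ, P {ω | N ω = j} =
      ENNReal.ofReal (Real.exp (-(lam Set.univ).toReal) * (lam Set.univ).toReal ^ j /
        (Nat.factorial j : ℝ)))
    (hTlaw : ∀ i, Measure.map (Tt i) P = (lam Set.univ)⁻¹ • lam)
    (hXlaw : ∀ i, Measure.map (Xx i) P = ν)
    (hIndep : ∀ (j n : ℕ) (A : ℕ → Set T) (B : ℕ → Set X),
      (∀ i, MeasurableSet (A i)) → (∀ i, MeasurableSet (B i)) →
      P ({ω | N ω = j} ∩ ⋂ i ∈ Finset.range n, ({ω | Tt i ω ∈ A i} ∩ {ω | Xx i ω ∈ B i}))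
        = P {ω | N ω = j} *
          ∏ i ∈ Finset.range n, (P {ω | Tt i ω ∈ A i} * P {ω | Xx i ω ∈ B i}))
    (f : T × X → ℝ) (hfc : Continuous f) (hf0 : ∀ z, 0 ≤ f z) (hfb : ∃ C, ∀ z, f z ≤ C)
    (r : ℝ) (hr : 0 < r) (hfvan : ∀ t x, dist x0 x < r → f (t, x) = 0) :
    Tendsto (fun n : ℕ => (n : ℝ) *
        ∫ ω, (1 - Real.exp (-∑ i ∈ Finset.range (N ω), f (Tt i ω, σ (a n)⁻¹ (Xx i ω)))) ∂P)
      atTop (𝓝 (∫ z : T × X, (1 - Real.exp (-f z)) ∂(lam.prod μ))) := by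
  classical
  have hΛ0 : lam Set.univ ≠ 0 := fun h0 => hlam0 (Measure.measure_univ_eq_zero.mp h0)
  have hΛtop : lam Set.univ ≠ ⊤ := measure_ne_top _ _
  set Λr : ℝ := (lam Set.univ).toReal with hΛrdef
  have hΛrpos : 0 < Λr := ENNReal.toReal_pos hΛ0 hΛtop
  set lamN : Measure T := (lam Set.univ)⁻¹ • lam with hlamNdef
  haveI hlamNP : IsProbabilityMeasure lamN :=
    ⟨by rw [hlamNdef, Measure.smul_apply, smul_eq_mul, ENNReal.inv_mul_cancel hΛ0 hΛtop]⟩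
  have hσcont : ∀ c : ℝ, 0 < c → Continuous fun x => σ c x := fun c hc =>
    hσc.comp_continuous (continuous_const.prodMk continuous_id) fun x => ⟨hc, trivial⟩
  -- pointwise bounds on 1 - exp(-f)
  have hbd1 : ∀ z : T × X, 0 ≤ 1 - Real.exp (-f z) ∧ 1 - Real.exp (-f z) ≤ 1 := by
    intro z
    constructor
    · have : Real.exp (-f z) ≤ 1 := Real.exp_le_one_iff.2 (neg_nonpos.2 (hf0 z))
      linarith
    · have := Real.exp_pos (-f z); linarith
  -- the function h
  set h : X → ℝ := fun x => ∫ t, (1 - Real.exp (-f (t, x))) ∂lam with hhdef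
  have hcont1 : ∀ x : X, Continuous fun t => 1 - Real.exp (-f (t, x)) := fun x =>
    continuous_const.sub ((Real.continuous_exp.comp
      ((hfc.comp (continuous_id.prodMk continuous_const)).neg)))
  have habs : ∀ z : T × X, |1 - Real.exp (-f z)| ≤ 1 := by
    intro z
    rw [abs_le]
    exact ⟨by linarith [(hbd1 z).1], (hbd1 z).2⟩
  have hint1 : ∀ x, Integrable (fun t => 1 - Real.exp (-f (t, x))) lam := fun x =>
    aux_integrable_of_bounded (hcont1 x).aestronglyMeasurable (C := 1)
      (fun t => habs (t, x))
  have hhcont : Continuous h := by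
    rw [hhdef]
    apply continuous_of_dominated (bound := fun _ => (1:ℝ))
      (fun x => (hcont1 x).aestronglyMeasurable)
      (fun x => ae_of_all _ fun t => by
        rw [Real.norm_eq_abs]
        exact habs (t, x))
      (integrable_const 1)
    exact ae_of_all _ fun t => continuous_const.sub (Real.continuous_exp.comp
      ((hfc.comp (continuous_const.prodMk continuous_id)).neg))
  have hh0 : ∀ x, 0 ≤ h x := fun x => integral_nonneg fun t => (hbd1 (t, x)).1
  have hhbd : ∀ x, |h x| ≤ Λr := by
    intro x
    rw [← Real.norm_eq_abs]
    calc ‖h x‖ ≤ 1 * (lam Set.univ).toReal :=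
          norm_integral_le_of_norm_le_const (ae_of_all _ fun t => by
            rw [Real.norm_eq_abs]
            exact habs (t, x))
      _ = Λr := by rw [one_mul]
  have hhvan : ∀ x, dist x0 x < r → h x = 0 := by
    intro x hx
    rw [hhdef]
    simp only [hfvan _ x hx, neg_zero, Real.exp_zero, sub_self, integral_zero]
  set c : ℕ → ℝ := fun n => ∫ x, h (σ (a n)⁻¹ x) ∂ν with hcdef
  have hRVh : Tendsto (fun n : ℕ => (n : ℝ) * c n) atTop (𝓝 (∫ x, h x ∂μ)) :=
    hRV h hhcont ⟨Λr, hhbd⟩ ⟨r, hr, hhvan⟩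
  have hcnn : ∀ n, 0 ≤ c n := fun n => integral_nonneg fun x => hh0 _
  have hczero : Tendsto c atTop (𝓝 0) := by
    have h1 : Tendsto (fun n : ℕ => ((n:ℝ) * c n) * (n:ℝ)⁻¹) atTop (𝓝 ((∫ x, h x ∂μ) * 0)) :=
      hRVh.mul tendsto_inv_atTop_nhds_zero_nat
    rw [mul_zero] at h1
    apply h1.congr'
    filter_upwards [eventually_ge_atTop 1] with n hn
    have : (n:ℝ) ≠ 0 := Nat.cast_ne_zero.2 (by omega)
    field_simp
  -- identify the RHS
  haveI hμSF : SFinite μ := aux_sfinite x0 μ hμFin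
  have hRHS : ∫ z : T × X, (1 - Real.exp (-f z)) ∂(lam.prod μ) = ∫ x, h x ∂μ := by
    have hS : MeasurableSet {x : X | r ≤ dist x0 x} :=
      (isClosed_le continuous_const (continuous_const.dist continuous_id)).measurableSet
    have hFcont : Continuous fun z : T × X => 1 - Real.exp (-f z) :=
      continuous_const.sub (Real.continuous_exp.comp hfc.neg)
    have hμS : (lam.prod μ) (Set.univ ×ˢ {x : X | r ≤ dist x0 x}) < ⊤ := by
      rw [Measure.prod_prod]
      exact ENNReal.mul_lt_top (lt_top_iff_ne_top.2 hΛtop) (lt_top_iff_ne_top.2 (hμFin r hr))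
    have hFint : Integrable (fun z : T × X => 1 - Real.exp (-f z)) (lam.prod μ) := by
      refine Integrable.mono'
        (g := (Set.univ ×ˢ {x : X | r ≤ dist x0 x}).indicator fun _ => (1:ℝ))
        ((integrable_indicator_iff (MeasurableSet.univ.prod hS)).2
          (integrableOn_const hμS.ne))
        hFcont.aestronglyMeasurable (ae_of_all _ fun z => ?_)
      by_cases hz : r ≤ dist x0 z.2
      · rw [Set.indicator_of_mem (show z ∈ Set.univ ×ˢ {x : X | r ≤ dist x0 x} from
          ⟨trivial, hz⟩)]
        rw [Real.norm_eq_abs]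
        exact habs z
      · have hz0 : f z = 0 := by
          have := hfvan z.1 z.2 (not_le.mp hz)
          simpa using this
        rw [hz0]
        simp only [neg_zero, Real.exp_zero, sub_self, norm_zero]
        exact Set.indicator_nonneg (fun _ _ => zero_le_one) z
    rw [integral_prod_symm _ hFint]
  -- the functions g n and their integrals
  have hgcont : ∀ n, Continuous fun z : T × X => f (z.1, σ (a n)⁻¹ z.2) := fun n =>
    hfc.comp (continuous_fst.prodMk ((hσcont _ (inv_pos.2 (ha n))).comp continuous_snd))
  set q : ℕ → ℝ := fun n => ∫ z : T × X, Real.exp (-f (z.1, σ (a n)⁻¹ z.2)) ∂(lamN.prod ν)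
    with hqdef
  have hexpbd : ∀ (n) (z : T × X), |Real.exp (-f (z.1, σ (a n)⁻¹ z.2))| ≤ 1 := by
    intro n z
    rw [abs_of_pos (Real.exp_pos _)]
    exact Real.exp_le_one_iff.2 (neg_nonpos.2 (hf0 _))
  have hq0 : ∀ n, 0 ≤ q n := fun n => integral_nonneg fun z => (Real.exp_pos _).le
  have hq_c : ∀ n, Λr * (1 - q n) = c n := by
    intro n
    have hint : Integrable (fun z : T × X => Real.exp (-f (z.1, σ (a n)⁻¹ z.2))) (lamN.prod ν) :=
      aux_integrable_of_bounded
        (Real.continuous_exp.comp (hgcont n).neg).aestronglyMeasurable (hexpbd n)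
    have h1 : 1 - q n = ∫ z : T × X, (1 - Real.exp (-f (z.1, σ (a n)⁻¹ z.2))) ∂(lamN.prod ν) := by
      rw [integral_sub (integrable_const 1) hint, integral_const, probReal_univ,
        smul_eq_mul, one_mul]
    have h2 : ∀ x : X, (∫ t, (1 - Real.exp (-f (t, σ (a n)⁻¹ x))) ∂lamN)
        = Λr⁻¹ * h (σ (a n)⁻¹ x) := by
      intro x
      rw [hlamNdef, integral_smul_measure, ENNReal.toReal_inv, smul_eq_mul]
    have h3 : Integrable (fun z : T × X => 1 - Real.exp (-f (z.1, σ (a n)⁻¹ z.2)))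
        (lamN.prod ν) := (integrable_const 1).sub hint
    rw [h1, integral_prod_symm _ h3]
    simp only [h2]
    rw [integral_const_mul]
    rw [← mul_assoc, mul_inv_cancel₀ hΛrpos.ne', one_mul]
  -- factorization over the event {N = j}
  have hfact : ∀ n j, ∫ ω in {ω | N ω = j},
      (∏ i ∈ Finset.range j, Real.exp (-f (Tt i ω, σ (a n)⁻¹ (Xx i ω)))) ∂P
      = (P {ω | N ω = j}).toReal * (q n) ^ j := by
    intro n j
    set A : Set Ω := {ω | N ω = j} with hAdef
    have hAmeas : MeasurableSet A := hNmeas (measurableSet_singleton j)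
    set G : Ω → (Fin j → T × X) := fun ω i => (Tt (i : ℕ) ω, Xx (i : ℕ) ω) with hGdef
    have hGmeas : Measurable G :=
      measurable_pi_lambda _ fun i => ((hTmeas i).prodMk (hXmeas i))
    set C0 : Set (Set (T × X)) :=
      Set.image2 (· ×ˢ ·) {s : Set T | MeasurableSet s} {t : Set X | MeasurableSet t} with hC0
    -- the two measures agree
    have hm12 : (P.restrict A).map G = P A • Measure.pi (fun _ : Fin j => lamN.prod ν) := by
      haveI : IsFiniteMeasure ((P.restrict A).map G) := Measure.isFiniteMeasure_map _ _
      have hgen : (inferInstance : MeasurableSpace (Fin j → T × X)) =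
          MeasurableSpace.generateFrom
            (Set.pi Set.univ '' Set.pi Set.univ fun _ : Fin j => C0) := by
        have h1 := generateFrom_pi_eq (C := fun _ : Fin j => C0)
          (fun _ => by
            rw [hC0]
            exact isCountablySpanning_measurableSet.prod isCountablySpanning_measurableSet)
        have h2 : (fun _ : Fin j => MeasurableSpace.generateFrom C0)
            = fun _ : Fin j => (Prod.instMeasurableSpace : MeasurableSpace (T × X)) := by
          funext _
          rw [hC0]
          exact generateFrom_prod
        rw [h2] at h1
        exact h1
      refine ext_of_generate_finite _ hgen (IsPiSystem.pi fun _ => by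
        rw [hC0]; exact isPiSystem_prod) ?_ ?_
      · rintro s ⟨s', hs', rfl⟩
        have hs'' : ∀ i : Fin j, ∃ (Ai : Set T) (Bi : Set X),
            MeasurableSet Ai ∧ MeasurableSet Bi ∧ Ai ×ˢ Bi = s' i := by
          intro i
          obtain ⟨Ai, hAi, Bi, hBi, heq⟩ := hs' i (Set.mem_univ i)
          exact ⟨Ai, Bi, hAi, hBi, heq⟩
        choose As Bs hAs hBs hABs using hs''
        classical
        set A' : ℕ → Set T := fun i => if hi : i < j then As ⟨i, hi⟩ else Set.univ with hA'
        set B' : ℕ → Set X := fun i => if hi : i < j then Bs ⟨i, hi⟩ else Set.univ with hB'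
        have hA'v : ∀ i : Fin j, A' (i : ℕ) = As i := by
          intro i
          rw [hA']
          simp only [i.isLt, dif_pos]
        have hB'v : ∀ i : Fin j, B' (i : ℕ) = Bs i := by
          intro i
          rw [hB']
          simp only [i.isLt, dif_pos]
        have hA'm : ∀ i, MeasurableSet (A' i) := by
          intro i
          rw [hA']
          by_cases hi : i < j
          · simp only [dif_pos hi]; exact hAs _
          · simp only [dif_neg hi]; exact MeasurableSet.univ
        have hB'm : ∀ i, MeasurableSet (B' i) := by
          intro i
          rw [hB']
          by_cases hi : i < j
          · simp only [dif_pos hi]; exact hBs _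
          · simp only [dif_neg hi]; exact MeasurableSet.univ
        have hs'meas : ∀ i : Fin j, MeasurableSet (s' i) := fun i =>
          hABs i ▸ (hAs i).prod (hBs i)
        have hpre : G ⁻¹' Set.pi Set.univ s'
            = ⋂ i ∈ Finset.range j, ({ω | Tt i ω ∈ A' i} ∩ {ω | Xx i ω ∈ B' i}) := by
          ext ω
          simp only [Set.mem_preimage, Set.mem_pi, Set.mem_univ, forall_true_left,
            Set.mem_iInter, Finset.mem_range, Set.mem_inter_iff, Set.mem_setOf_eq]
          constructor
          · intro hmem i hi
            have h3 := hmem ⟨i, hi⟩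
            rw [← hABs ⟨i, hi⟩] at h3
            have h4 := hA'v ⟨i, hi⟩
            have h5 := hB'v ⟨i, hi⟩
            rw [h4, h5]
            exact ⟨h3.1, h3.2⟩
          · intro hmem i
            have h3 := hmem (i : ℕ) i.isLt
            rw [hA'v i, hB'v i] at h3
            rw [← hABs i]
            exact ⟨h3.1, h3.2⟩
        have hmap : ((P.restrict A).map G) (Set.pi Set.univ s')
            = P (A ∩ ⋂ i ∈ Finset.range j, ({ω | Tt i ω ∈ A' i} ∩ {ω | Xx i ω ∈ B' i})) := by
          rw [Measure.map_apply hGmeas (MeasurableSet.univ_pi hs'meas),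
            Measure.restrict_apply (hGmeas (MeasurableSet.univ_pi hs'meas)), hpre,
            Set.inter_comm _ A]
        rw [hmap, hIndep j j A' B' hA'm hB'm, Measure.smul_apply, Measure.pi_pi, smul_eq_mul]
        congr 1
        rw [← Fin.prod_univ_eq_prod_range
          (fun i => P {ω | Tt i ω ∈ A' i} * P {ω | Xx i ω ∈ B' i}) j]
        refine Finset.prod_congr rfl fun i _ => ?_
        have hTv : P {ω | Tt (i : ℕ) ω ∈ A' (i : ℕ)} = lamN (As i) := by
          have hpre2 : {ω | Tt (i : ℕ) ω ∈ A' (i : ℕ)} = Tt (i : ℕ) ⁻¹' (A' (i : ℕ)) := rfl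
          rw [hpre2, ← Measure.map_apply (hTmeas i) (hA'm i), hTlaw, hA'v i]
        have hXv : P {ω | Xx (i : ℕ) ω ∈ B' (i : ℕ)} = ν (Bs i) := by
          have hpre2 : {ω | Xx (i : ℕ) ω ∈ B' (i : ℕ)} = Xx (i : ℕ) ⁻¹' (B' (i : ℕ)) := rfl
          rw [hpre2, ← Measure.map_apply (hXmeas i) (hB'm i), hXlaw, hB'v i]
        rw [hTv, hXv, ← hABs i, Measure.prod_prod]
      · rw [Measure.map_apply hGmeas MeasurableSet.univ, Set.preimage_univ,
          Measure.restrict_apply_univ, Measure.smul_apply, measure_univ, smul_eq_mul, mul_one]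
    -- now compute the integral
    have hφcont : Continuous fun z : T × X => Real.exp (-f (z.1, σ (a n)⁻¹ z.2)) :=
      Real.continuous_exp.comp (hgcont n).neg
    have hFcont : Continuous fun p : Fin j → T × X =>
        ∏ i : Fin j, Real.exp (-f ((p i).1, σ (a n)⁻¹ (p i).2)) :=
      continuous_finset_prod _ fun i _ => hφcont.comp (continuous_apply i)
    have hstep1 : ∫ ω in A,
        (∏ i ∈ Finset.range j, Real.exp (-f (Tt i ω, σ (a n)⁻¹ (Xx i ω)))) ∂P
        = ∫ p, (∏ i : Fin j, Real.exp (-f ((p i).1, σ (a n)⁻¹ (p i).2)))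
            ∂((P.restrict A).map G) := by
      rw [integral_map hGmeas.aemeasurable hFcont.aestronglyMeasurable]
      refine integral_congr_ae (ae_of_all _ fun ω => ?_)
      exact (Fin.prod_univ_eq_prod_range
        (fun i => Real.exp (-f (Tt i ω, σ (a n)⁻¹ (Xx i ω)))) j).symm
    have hstep2 : ∫ p, (∏ i : Fin j, Real.exp (-f ((p i).1, σ (a n)⁻¹ (p i).2)))
        ∂(P A • Measure.pi (fun _ : Fin j => lamN.prod ν)) = (P A).toReal * (q n) ^ j := by
      rw [integral_smul_measure, smul_eq_mul]
      congr 1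
      letI : MeasureSpace (T × X) := ⟨lamN.prod ν⟩
      haveI : SigmaFinite (volume : Measure (T × X)) := by
        show SigmaFinite (lamN.prod ν)
        infer_instance
      have hv : Measure.pi (fun _ : Fin j => lamN.prod ν)
          = (volume : Measure (Fin j → T × X)) := volume_pi.symm
      rw [hv, hqdef]
      have h6 := MeasureTheory.integral_fintype_prod_eq_pow (𝕜 := ℝ) (ι := Fin j)
        (fun z : T × X => Real.exp (-f (z.1, σ (a n)⁻¹ z.2))) (μ := volume)
      simp only [Fintype.card_fin] at h6
      exact h6
    rw [hstep1, hm12, hstep2]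
  -- key identity per n
  have hNj : ∀ j : ℕ, MeasurableSet {ω | N ω = j} := fun j => hNmeas (measurableSet_singleton j)
  have hSmeas : ∀ n, Measurable fun ω =>
      Real.exp (-∑ i ∈ Finset.range (N ω), f (Tt i ω, σ (a n)⁻¹ (Xx i ω))) := by
    intro n
    have h1 : Measurable fun p : Ω × ℕ =>
        ∑ i ∈ Finset.range p.2, f (Tt i p.1, σ (a n)⁻¹ (Xx i p.1)) := by
      apply measurable_from_prod_countable_left
      intro j
      show Measurable fun ω : Ω => ∑ i ∈ Finset.range j, f (Tt i ω, σ (a n)⁻¹ (Xx i ω))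
      apply Finset.measurable_sum
      intro i _
      exact (hgcont n).measurable.comp ((hTmeas i).prodMk (hXmeas i))
    exact Real.measurable_exp.comp (h1.comp (measurable_id.prodMk hNmeas)).neg
  have hExpInt : ∀ n, Integrable (fun ω =>
      Real.exp (-∑ i ∈ Finset.range (N ω), f (Tt i ω, σ (a n)⁻¹ (Xx i ω)))) P := by
    intro n
    refine aux_integrable_of_bounded (hSmeas n).aestronglyMeasurable (C := 1) fun ω => ?_
    rw [abs_of_pos (Real.exp_pos _)]
    refine Real.exp_le_one_iff.2 (neg_nonpos.2 (Finset.sum_nonneg fun i _ => hf0 _))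
  have hkey : ∀ n, ∫ ω, Real.exp (-∑ i ∈ Finset.range (N ω),
      f (Tt i ω, σ (a n)⁻¹ (Xx i ω))) ∂P = Real.exp (-(c n)) := by
    intro n
    have hdisj : Pairwise (Function.onFun Disjoint fun j => {ω | N ω = j}) := by
      intro i j hij
      refine Set.disjoint_left.2 fun ω hi hj => hij ?_
      exact (show N ω = i from hi).symm.trans hj
    have hUnion : (⋃ j, {ω | N ω = j}) = Set.univ := by
      ext ω; simp
    have hsplit : ∫ ω, Real.exp (-∑ i ∈ Finset.range (N ω),
        f (Tt i ω, σ (a n)⁻¹ (Xx i ω))) ∂P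
        = ∑' j : ℕ, ∫ ω in {ω | N ω = j}, Real.exp (-∑ i ∈ Finset.range (N ω),
            f (Tt i ω, σ (a n)⁻¹ (Xx i ω))) ∂P := by
      rw [← setIntegral_univ, ← hUnion, integral_iUnion hNj hdisj (hExpInt n).integrableOn]
    have hjeq : ∀ j : ℕ, ∫ ω in {ω | N ω = j}, Real.exp (-∑ i ∈ Finset.range (N ω),
        f (Tt i ω, σ (a n)⁻¹ (Xx i ω))) ∂P = (P {ω | N ω = j}).toReal * (q n) ^ j := by
      intro j
      rw [← hfact n j]
      apply setIntegral_congr_fun (hNj j)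
      intro ω hω
      have hNω : N ω = j := hω
      show Real.exp (-∑ i ∈ Finset.range (N ω), f (Tt i ω, σ (a n)⁻¹ (Xx i ω)))
        = ∏ i ∈ Finset.range j, Real.exp (-f (Tt i ω, σ (a n)⁻¹ (Xx i ω)))
      rw [hNω, ← Real.exp_sum]
      congr 1
      rw [← Finset.sum_neg_distrib]
    have hPj : ∀ j : ℕ, (P {ω | N ω = j}).toReal
        = Real.exp (-Λr) * Λr ^ j / (Nat.factorial j : ℝ) := by
      intro j
      rw [hNlaw j, ENNReal.toReal_ofReal]
      apply div_nonneg (mul_nonneg (Real.exp_pos _).le (pow_nonneg hΛrpos.le j))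
        (Nat.cast_nonneg _)
    calc ∫ ω, Real.exp (-∑ i ∈ Finset.range (N ω), f (Tt i ω, σ (a n)⁻¹ (Xx i ω))) ∂P
        = ∑' j : ℕ, (P {ω | N ω = j}).toReal * (q n) ^ j := by rw [hsplit]; exact tsum_congr hjeq
      _ = ∑' j : ℕ, Real.exp (-Λr) * ((Λr * q n) ^ j / (Nat.factorial j : ℝ)) := by
          refine tsum_congr fun j => ?_
          rw [hPj j, mul_pow]
          ring
      _ = Real.exp (-Λr) * Real.exp (Λr * q n) := by rw [tsum_mul_left, aux_exp_tsum]
      _ = Real.exp (-(c n)) := by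
          rw [← Real.exp_add, ← hq_c n]
          congr 1
          ring
  have hmain : ∀ n, ∫ ω, (1 - Real.exp (-∑ i ∈ Finset.range (N ω),
      f (Tt i ω, σ (a n)⁻¹ (Xx i ω)))) ∂P = 1 - Real.exp (-(c n)) := by
    intro n
    rw [integral_sub (integrable_const 1) (hExpInt n), integral_const, probReal_univ,
      smul_eq_mul, one_mul, hkey n]
  rw [hRHS]
  exact (aux_tendsto hcnn hRVh hczero).congr fun n => by rw [hmain n]
end
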